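/- arXiv:2506.11803 — 6 statements merged into one kernel-verified Lean document; each statement's English description precedes it below -/
import Mathlib

section
/- Let N ≥ 1, let E and F be real inner product spaces, and for i = 1,…,N let L_i : E × F → ℝ be differentiable with ‖∇_w L_i(w,v) − ∇_w L_i(w′,v)‖ ≤ L‖w − w′‖ for all w, w′ ∈ E, v ∈ F, for some L > 0. Fix points w_1,…,w_N ∈ E and v_1,…,v_N ∈ F, set w̄ := (1/N)∑_{i=1}^N w_i, Ḡ := (1/N)∑_{i=1}^N ∇_w L_i(w̄, v_i) and G := (1/N)∑_{i=1}^N ∇_w L_i(w_i, v_i). Then for every η > 0: ⟨Ḡ, −η G⟩ ≤ (η L²/(2N))∑_{i=1}^N ‖w̄ − w_i‖² − (η/2)‖Ḡ‖² − (η/2)‖G‖². -/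
open scoped RealInnerProductSpace

/-- deterministic core of the bound on the inner-product term `C₁`. -/
theorem stmt2 {E F : Type*}
    [NormedAddCommGroup E] [InnerProductSpace ℝ E] [CompleteSpace E]
    [NormedAddCommGroup F] [InnerProductSpace ℝ F] [CompleteSpace F]
    (N : ℕ) (hN : 1 ≤ N)
    (Lf : Fin N → E × F → ℝ) (hdiff : ∀ i, Differentiable ℝ (Lf i))
    (gradW : Fin N → E → F → E)
    (hgradW : ∀ i w v, HasGradientAt (fun w' => Lf i (w', v)) (gradW i w v) w)
    (L : ℝ) (hL : 0 < L)
    (hLipW : ∀ i (w w' : E) (v : F), ‖gradW i w v - gradW i w' v‖ ≤ L * ‖w - w'‖)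
    (w : Fin N → E) (v : Fin N → F)
    (wbar : E) (hwbar : wbar = (N : ℝ)⁻¹ • ∑ i, w i)
    (Gbar G : E)
    (hGbar : Gbar = (N : ℝ)⁻¹ • ∑ i, gradW i wbar (v i))
    (hG : G = (N : ℝ)⁻¹ • ∑ i, gradW i (w i) (v i)) :
    ∀ η : ℝ, 0 < η →
      ⟪Gbar, (-η) • G⟫ ≤
        η * L ^ 2 / (2 * N) * ∑ i, ‖wbar - w i‖ ^ 2
          - η / 2 * ‖Gbar‖ ^ 2 - η / 2 * ‖G‖ ^ 2 := by
  intro η hη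
  have hNpos : (0 : ℝ) < N := by exact_mod_cast hN
  -- inner product identity
  have hid : ⟪Gbar, (-η) • G⟫ =
      η / 2 * ‖Gbar - G‖ ^ 2 - η / 2 * ‖Gbar‖ ^ 2 - η / 2 * ‖G‖ ^ 2 := by
    have h1 : ‖Gbar - G‖ ^ 2 = ‖Gbar‖ ^ 2 - 2 * ⟪Gbar, G⟫ + ‖G‖ ^ 2 := by
      rw [norm_sub_sq_real]
    have h2 : ⟪Gbar, (-η) • G⟫ = -η * ⟪Gbar, G⟫ := real_inner_smul_right _ _ _
    rw [h2]; nlinarith [h1]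
  rw [hid]
  have key : ‖Gbar - G‖ ^ 2 ≤ L ^ 2 / N * ∑ i, ‖wbar - w i‖ ^ 2 := by
    have hdiffeq : Gbar - G = (N : ℝ)⁻¹ • ∑ i, (gradW i wbar (v i) - gradW i (w i) (v i)) := by
      rw [hGbar, hG, ← smul_sub, Finset.sum_sub_distrib]
    have hnorm1 : ‖Gbar - G‖ ≤ (N : ℝ)⁻¹ * ∑ i, (L * ‖wbar - w i‖) := by
      rw [hdiffeq, norm_smul, norm_inv, Real.norm_natCast]
      gcongr
      calc ‖∑ i, (gradW i wbar (v i) - gradW i (w i) (v i))‖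
          ≤ ∑ i, ‖gradW i wbar (v i) - gradW i (w i) (v i)‖ := norm_sum_le _ _
        _ ≤ ∑ i, (L * ‖wbar - w i‖) := Finset.sum_le_sum fun i _ => hLipW i _ _ _
    have hsq : ‖Gbar - G‖ ^ 2 ≤ ((N : ℝ)⁻¹ * ∑ i, (L * ‖wbar - w i‖)) ^ 2 := by
      have h0 : (0 : ℝ) ≤ ‖Gbar - G‖ := norm_nonneg _
      nlinarith
    refine hsq.trans ?_
    have hcs : (∑ i, ‖wbar - w i‖) ^ 2 ≤ (N : ℝ) * ∑ i, ‖wbar - w i‖ ^ 2 := by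
      have := sq_sum_le_card_mul_sum_sq (s := Finset.univ) (f := fun i : Fin N => ‖wbar - w i‖)
      simpa using this
    have hexp : ((N : ℝ)⁻¹ * ∑ i, (L * ‖wbar - w i‖)) ^ 2
        = L ^ 2 / N ^ 2 * (∑ i, ‖wbar - w i‖) ^ 2 := by
      rw [← Finset.mul_sum]; field_simp
    rw [hexp]
    calc L ^ 2 / N ^ 2 * (∑ i, ‖wbar - w i‖) ^ 2
        ≤ L ^ 2 / N ^ 2 * ((N : ℝ) * ∑ i, ‖wbar - w i‖ ^ 2) := by
          apply mul_le_mul_of_nonneg_left hcs; positivity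
      _ = L ^ 2 / N * ∑ i, ‖wbar - w i‖ ^ 2 := by field_simp
  have : η / 2 * ‖Gbar - G‖ ^ 2 ≤ η * L ^ 2 / (2 * N) * ∑ i, ‖wbar - w i‖ ^ 2 := by
    calc η / 2 * ‖Gbar - G‖ ^ 2 ≤ η / 2 * (L ^ 2 / N * ∑ i, ‖wbar - w i‖ ^ 2) := by
          apply mul_le_mul_of_nonneg_left key; positivity
      _ = η * L ^ 2 / (2 * N) * ∑ i, ‖wbar - w i‖ ^ 2 := by field_simp
  linarith
end

section
/- Let F be a finite-dimensional real inner product space, h : F → F an L-Lipschitz map with L > 0, σ ≥ 0, η > 0, and τ ≥ 1 an integer. On a probability space with a filtration (F_r)_{r≥0}, let v_0 be a square-integrable F_0-measurable random vector in F, and for r ≥ 1 define v_r := v_{r−1} − η X_{r−1}, where each X_r is a square-integrable F_{r+1}-measurable random vector satisfying E[X_r | F_r] = h(v_r) and E‖X_r − h(v_r)‖² ≤ σ². Then for every integer s with 1 ≤ s ≤ τ: E‖v_s − v_0‖² ≤ (1 + 1/(2τ−1) + 6η²τL²)·E‖v_{s−1} − v_0‖² + (η² + 6η²τ)·σ² +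 6η²τ·E‖X_0‖². -/
open MeasureTheory
open scoped InnerProductSpace

section aux

variable {Ω : Type*} {m m0 : MeasurableSpace Ω} {μ : Measure Ω}
variable {F : Type*} [NormedAddCommGroup F] [InnerProductSpace ℝ F] [FiniteDimensional ℝ F]

lemma memLp_comp_of_lip [IsFiniteMeasure μ] {L : ℝ} (h : F → F) (hL : 0 ≤ L)
    (hLip : ∀ a b, ‖h a - h b‖ ≤ L * ‖a - b‖)
    {f : Ω → F} (hf : MemLp f 2 μ) : MemLp (fun ω => h (f ω)) 2 μ := by
  have hcont : Continuous h := by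
    refine (LipschitzWith.of_dist_le_mul (K := ⟨L, hL⟩) fun a b => ?_).continuous
    rw [dist_eq_norm, dist_eq_norm]; exact hLip a b
  have hmeas : AEStronglyMeasurable (fun ω => h (f ω)) μ :=
    hcont.comp_aestronglyMeasurable hf.aestronglyMeasurable
  have hbd : MemLp (fun ω => ‖h 0‖ + L * ‖f ω‖) 2 μ :=
    (memLp_const (‖h 0‖)).add ((hf.norm).const_mul L)
  refine hbd.of_le hmeas (Filter.Eventually.of_forall fun ω => ?_)
  have h1 : ‖h (f ω)‖ ≤ ‖h 0‖ + L * ‖f ω‖ := by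
    have := hLip (f ω) 0
    have h2 : ‖h (f ω)‖ - ‖h 0‖ ≤ ‖h (f ω) - h 0‖ := norm_sub_norm_le _ _
    simp only [sub_zero] at this
    linarith
  have h3 : 0 ≤ ‖h 0‖ + L * ‖f ω‖ := by positivity
  calc ‖h (f ω)‖ ≤ ‖h 0‖ + L * ‖f ω‖ := h1
    _ ≤ ‖‖h 0‖ + L * ‖f ω‖‖ := le_abs_self _

lemma integrable_inner_of_memLp2 {f g : Ω → F} (hf : MemLp f 2 μ) (hg : MemLp g 2 μ) :
    Integrable (fun ω => ⟪f ω, g ω⟫_ℝ) μ := by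
  have := L2.integrable_inner (𝕜 := ℝ) (hf.toLp f) (hg.toLp g)
  refine this.congr ?_
  filter_upwards [hf.coeFn_toLp, hg.coeFn_toLp] with ω h1 h2
  rw [h1, h2]

/-- Orthogonality: if `Y` is `m`-measurable and in `L²`, `Z` is in `L²` with `E[Z|m] = 0` a.e.,
then `E⟪Y, Z⟫ = 0`. -/
lemma integral_inner_eq_zero [IsProbabilityMeasure μ] (hm : m ≤ m0) (Y Z : Ω → F)
    (hYm : StronglyMeasurable[m] Y) (hY2 : MemLp Y 2 μ) (hZ2 : MemLp Z 2 μ)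
    (hZ : μ[Z|m] =ᵐ[μ] 0) : ∫ ω, ⟪Y ω, Z ω⟫_ℝ ∂μ = 0 := by
  haveI : SigmaFinite (μ.trim hm) := by infer_instance
  set b := stdOrthonormalBasis ℝ F with hb
  have hZint : Integrable Z μ := hZ2.integrable one_le_two
  -- each coordinate of Z has zero conditional expectation
  have hcoord : ∀ i, μ[fun ω => ⟪b i, Z ω⟫_ℝ|m] =ᵐ[μ] 0 := by
    intro i
    have hZi : Integrable (fun ω => ⟪b i, Z ω⟫_ℝ) μ := hZint.const_inner (b i)
    refine (ae_eq_condExp_of_forall_setIntegral_eq hm hZi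
      (fun s _ _ => (integrable_zero _ _ _).integrableOn)
      (fun s hs hμs => ?_) (StronglyMeasurable.aestronglyMeasurable
        (stronglyMeasurable_zero))).symm
    have h1 : ∫ ω in s, ⟪b i, Z ω⟫_ℝ ∂μ = ⟪b i, ∫ ω in s, Z ω ∂μ⟫_ℝ :=
      integral_inner hZint.integrableOn (b i)
    have h2 : ∫ ω in s, Z ω ∂μ = 0 := by
      rw [← setIntegral_condExp hm hZint hs]
      rw [setIntegral_congr_ae (hm s hs) (hZ.mono fun ω hω _ => hω)]
      simp
    simp [h1, h2]
  -- coordinates of Y and Z are in L²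
  have hcoordLp : ∀ (W : Ω → F), MemLp W 2 μ → ∀ i, MemLp (fun ω => ⟪b i, W ω⟫_ℝ) 2 μ := by
    intro W hW i
    have hmeas : AEStronglyMeasurable (fun ω => ⟪b i, W ω⟫_ℝ) μ :=
      (innerSL ℝ (b i)).continuous.comp_aestronglyMeasurable hW.aestronglyMeasurable
    refine (hW.norm.const_mul ‖b i‖).of_le hmeas (Filter.Eventually.of_forall fun ω => ?_)
    calc ‖⟪b i, W ω⟫_ℝ‖ ≤ ‖b i‖ * ‖W ω‖ := norm_inner_le_norm _ _
      _ ≤ ‖‖b i‖ * ‖W ω‖‖ := le_abs_self _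
  have hprod : ∀ i, Integrable (fun ω => ⟪b i, Y ω⟫_ℝ * ⟪b i, Z ω⟫_ℝ) μ := fun i => by
    have := integrable_inner_of_memLp2 (F := ℝ) (hcoordLp Y hY2 i) (hcoordLp Z hZ2 i)
    simpa [RCLike.inner_apply, conj_trivial, mul_comm] using this
  have hsum : ∀ ω, ⟪Y ω, Z ω⟫_ℝ = ∑ i, ⟪b i, Y ω⟫_ℝ * ⟪b i, Z ω⟫_ℝ := by
    intro ω
    rw [← b.sum_inner_mul_inner (Y ω) (Z ω)]
    exact Finset.sum_congr rfl fun i _ => by rw [real_inner_comm (Y ω) (b i)]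
  calc ∫ ω, ⟪Y ω, Z ω⟫_ℝ ∂μ
      = ∑ i, ∫ ω, ⟪b i, Y ω⟫_ℝ * ⟪b i, Z ω⟫_ℝ ∂μ := by
        simp_rw [hsum]
        exact integral_finset_sum _ fun i _ => hprod i
    _ = 0 := by
        refine Finset.sum_eq_zero fun i _ => ?_
        have hYi : StronglyMeasurable[m] (fun ω => ⟪b i, Y ω⟫_ℝ) :=
          (innerSL ℝ (b i)).continuous.comp_stronglyMeasurable hYm
        have hZi : Integrable (fun ω => ⟪b i, Z ω⟫_ℝ) μ :=
          ((hcoordLp Z hZ2 i).integrable one_le_two)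
        have hpull := condExp_mul_of_stronglyMeasurable_left hYi (hprod i) hZi
        have h0 : μ[fun ω => ⟪b i, Y ω⟫_ℝ * ⟪b i, Z ω⟫_ℝ|m] =ᵐ[μ] 0 := by
          refine hpull.trans ?_
          filter_upwards [hcoord i] with ω hω
          simp [Pi.mul_apply, hω]
        rw [← integral_condExp hm (f := fun ω => ⟪b i, Y ω⟫_ℝ * ⟪b i, Z ω⟫_ℝ) (μ := μ),
          integral_congr_ae h0]
        simp

end aux

lemma young_aux (t x y : ℝ) (ht : 1 ≤ t) (hx : 0 ≤ x) (hy : 0 ≤ y) :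
    (x + y) ^ 2 ≤ (1 + 1 / (2 * t - 1)) * x ^ 2 + 2 * t * y ^ 2 := by
  have htpos : 0 < 2 * t - 1 := by linarith
  have hcc : (1 / (2 * t - 1)) * (2 * t - 1) = 1 := by field_simp
  have hcnn : (0 : ℝ) ≤ 1 / (2 * t - 1) := by positivity
  have key : (2 * t - 1) * (x + y) ^ 2 ≤ (2 * t) * x ^ 2 + (2 * t - 1) * (2 * t) * y ^ 2 := by
    nlinarith [sq_nonneg (x - (2 * t - 1) * y)]
  have e : ∀ z : ℝ, (1 / (2 * t - 1)) * ((2 * t - 1) * z) = z := fun z => by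
    rw [← mul_assoc, hcc, one_mul]
  calc (x + y) ^ 2 = (1 / (2 * t - 1)) * ((2 * t - 1) * (x + y) ^ 2) := (e _).symm
    _ ≤ (1 / (2 * t - 1)) * ((2 * t) * x ^ 2 + (2 * t - 1) * (2 * t) * y ^ 2) :=
        mul_le_mul_of_nonneg_left key hcnn
    _ = (1 + 1 / (2 * t - 1)) * x ^ 2 + 2 * t * y ^ 2 := by
        linear_combination (x ^ 2 + 2 * t * y ^ 2) * hcc

lemma sq_le_three_aux (a b c d : ℝ) (ha : 0 ≤ a) (hb : 0 ≤ b) (hc : 0 ≤ c) (hd : 0 ≤ d)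
    (h : a ≤ b + c + d) : a ^ 2 ≤ 3 * b ^ 2 + 3 * c ^ 2 + 3 * d ^ 2 := by
  have h2 : a ^ 2 ≤ (b + c + d) ^ 2 := by nlinarith
  nlinarith [sq_nonneg (b - c), sq_nonneg (b - d), sq_nonneg (c - d)]


/-- one-step recursion for the local drift of the personalized-adapter
iterates in the PE-MA algorithm. -/
theorem stmt6 {F : Type*}
    [NormedAddCommGroup F] [InnerProductSpace ℝ F] [FiniteDimensional ℝ F]
    {Ω : Type*} {m0 : MeasurableSpace Ω} (μ : Measure Ω) [IsProbabilityMeasure μ]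
    (ℱ : Filtration ℕ m0)
    (h : F → F) (L : ℝ) (hL : 0 < L) (hLip : ∀ a b, ‖h a - h b‖ ≤ L * ‖a - b‖)
    (σ η : ℝ) (hσ : 0 ≤ σ) (hη : 0 < η) (τ : ℕ) (hτ : 1 ≤ τ)
    (v X : ℕ → Ω → F)
    (hv0meas : StronglyMeasurable[ℱ 0] (v 0)) (hv02 : MemLp (v 0) 2 μ)
    (hrec : ∀ r : ℕ, v (r + 1) = fun ω => v r ω - η • X r ω)
    (hX2 : ∀ r, MemLp (X r) 2 μ)
    (hXmeas : ∀ r, StronglyMeasurable[ℱ (r + 1)] (X r))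
    (hunbiased : ∀ r, μ[X r|ℱ r] =ᵐ[μ] fun ω => h (v r ω))
    (hvar : ∀ r, ∫ ω, ‖X r ω - h (v r ω)‖ ^ 2 ∂μ ≤ σ ^ 2) :
    ∀ s : ℕ, 1 ≤ s → s ≤ τ →
      ∫ ω, ‖v s ω - v 0 ω‖ ^ 2 ∂μ ≤
        (1 + 1 / (2 * (τ : ℝ) - 1) + 6 * η ^ 2 * τ * L ^ 2)
            * ∫ ω, ‖v (s - 1) ω - v 0 ω‖ ^ 2 ∂μ
          + (η ^ 2 + 6 * η ^ 2 * τ) * σ ^ 2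
          + 6 * η ^ 2 * τ * ∫ ω, ‖X 0 ω‖ ^ 2 ∂μ := by
  have hcont : Continuous h := by
    refine (LipschitzWith.of_dist_le_mul (K := ⟨L, hL.le⟩) fun a b => ?_).continuous
    rw [dist_eq_norm, dist_eq_norm]; exact hLip a b
  -- measurability and integrability of the iterates
  have hvmeas : ∀ n, StronglyMeasurable[ℱ n] (v n) := by
    intro n
    induction n with
    | zero => exact hv0meas
    | succ k ih =>
        rw [hrec k]
        exact (ih.mono (ℱ.mono k.le_succ)).sub ((hXmeas k).const_smul η)
  have hv2 : ∀ n, MemLp (v n) 2 μ := by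
    intro n
    induction n with
    | zero => exact hv02
    | succ k ih =>
        rw [hrec k]
        exact ih.sub ((hX2 k).const_smul η)
  intro s hs1 hsτ
  obtain ⟨r, rfl⟩ : ∃ r, s = r + 1 := ⟨s - 1, (Nat.succ_pred_eq_of_pos hs1).symm⟩
  simp only [Nat.add_sub_cancel]
  -- notation
  set A : Ω → F := fun ω => v r ω - v 0 ω with hA
  set g : Ω → F := fun ω => h (v r ω) with hg
  set D : Ω → F := fun ω => X r ω - g ω with hD
  set Y : Ω → F := fun ω => A ω - η • g ω with hY
  set D0 : Ω → F := fun ω => X 0 ω - h (v 0 ω) with hD0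
  -- MemLp facts
  have hA2 : MemLp A 2 μ := (hv2 r).sub hv02
  have hg2 : MemLp g 2 μ := memLp_comp_of_lip h hL.le hLip (hv2 r)
  have hD2 : MemLp D 2 μ := (hX2 r).sub hg2
  have hY2 : MemLp Y 2 μ := hA2.sub (hg2.const_smul η)
  have hg02 : MemLp (fun ω => h (v 0 ω)) 2 μ := memLp_comp_of_lip h hL.le hLip hv02
  have hD02 : MemLp D0 2 μ := (hX2 0).sub hg02
  -- measurability w.r.t. ℱ r
  have hgmeas : StronglyMeasurable[ℱ r] g := hcont.comp_stronglyMeasurable (hvmeas r)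
  have hYmeas : StronglyMeasurable[ℱ r] Y :=
    ((hvmeas r).sub (hv0meas.mono (ℱ.mono (Nat.zero_le r)))).sub (hgmeas.const_smul η)
  -- conditional expectation of the noise is zero
  have hZero : μ[D|ℱ r] =ᵐ[μ] 0 := by
    have h1 : μ[D|ℱ r] =ᵐ[μ] μ[X r|ℱ r] - μ[g|ℱ r] :=
      condExp_sub ((hX2 r).integrable one_le_two) (hg2.integrable one_le_two) _
    have h2 : μ[g|ℱ r] = g :=
      condExp_of_stronglyMeasurable (ℱ.le r) hgmeas (hg2.integrable one_le_two)
    refine h1.trans ?_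
    rw [h2]
    filter_upwards [hunbiased r] with ω hω
    simp [Pi.sub_apply, hω, hg]
  -- orthogonality
  have horth : ∫ ω, ⟪Y ω, D ω⟫_ℝ ∂μ = 0 :=
    integral_inner_eq_zero (ℱ.le r) Y D hYmeas hY2 hD2 hZero
  -- integrability of all squared norms
  have hsq : ∀ (W : Ω → F), MemLp W 2 μ → Integrable (fun ω => ‖W ω‖ ^ 2) μ :=
    fun W hW => hW.norm.integrable_sq
  have hYD : Integrable (fun ω => ⟪Y ω, D ω⟫_ℝ) μ := integrable_inner_of_memLp2 hY2 hD2
  -- expansion of the square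
  have hexp : ∫ ω, ‖v (r + 1) ω - v 0 ω‖ ^ 2 ∂μ
      = ∫ ω, ‖Y ω‖ ^ 2 ∂μ + η ^ 2 * ∫ ω, ‖D ω‖ ^ 2 ∂μ := by
    have heq : ∀ ω, ‖v (r + 1) ω - v 0 ω‖ ^ 2
        = ‖Y ω‖ ^ 2 - 2 * η * ⟪Y ω, D ω⟫_ℝ + η ^ 2 * ‖D ω‖ ^ 2 := by
      intro ω
      have hv' : v (r + 1) ω - v 0 ω = Y ω - η • D ω := by
        rw [hrec r]
        simp only [hY, hA, hD, hg, smul_sub]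
        abel
      rw [hv', norm_sub_sq_real, real_inner_smul_right, norm_smul]
      simp [mul_pow, sq_abs, abs_of_pos hη]
      ring
    have iY : Integrable (fun ω => ‖Y ω‖ ^ 2) μ := hsq Y hY2
    have iYD : Integrable (fun ω => 2 * η * ⟪Y ω, D ω⟫_ℝ) μ := hYD.const_mul _
    have iD : Integrable (fun ω => η ^ 2 * ‖D ω‖ ^ 2) μ := (hsq D hD2).const_mul _
    have i1 : Integrable (fun ω => ‖Y ω‖ ^ 2 - 2 * η * ⟪Y ω, D ω⟫_ℝ) μ := iY.sub iYD
    calc ∫ ω, ‖v (r + 1) ω - v 0 ω‖ ^ 2 ∂μ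
        = ∫ ω, (‖Y ω‖ ^ 2 - 2 * η * ⟪Y ω, D ω⟫_ℝ + η ^ 2 * ‖D ω‖ ^ 2) ∂μ := by
          simp_rw [heq]
      _ = (∫ ω, (‖Y ω‖ ^ 2 - 2 * η * ⟪Y ω, D ω⟫_ℝ) ∂μ) + ∫ ω, η ^ 2 * ‖D ω‖ ^ 2 ∂μ :=
          integral_add i1 iD
      _ = ((∫ ω, ‖Y ω‖ ^ 2 ∂μ) - ∫ ω, 2 * η * ⟪Y ω, D ω⟫_ℝ ∂μ) + ∫ ω, η ^ 2 * ‖D ω‖ ^ 2 ∂μ := by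
          rw [integral_sub iY iYD]
      _ = ((∫ ω, ‖Y ω‖ ^ 2 ∂μ) - 2 * η * ∫ ω, ⟪Y ω, D ω⟫_ℝ ∂μ)
            + η ^ 2 * ∫ ω, ‖D ω‖ ^ 2 ∂μ := by
          rw [integral_const_mul, integral_const_mul]
      _ = ∫ ω, ‖Y ω‖ ^ 2 ∂μ + η ^ 2 * ∫ ω, ‖D ω‖ ^ 2 ∂μ := by
          rw [horth]; ring
  -- Young step
  set c : ℝ := 1 / (2 * (τ : ℝ) - 1) with hc
  have hτ1 : (1 : ℝ) ≤ (τ : ℝ) := by exact_mod_cast hτ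
  have hcpos : 0 < 2 * (τ : ℝ) - 1 := by linarith
  have hyoung : ∫ ω, ‖Y ω‖ ^ 2 ∂μ
      ≤ (1 + c) * ∫ ω, ‖A ω‖ ^ 2 ∂μ + 2 * τ * η ^ 2 * ∫ ω, ‖g ω‖ ^ 2 ∂μ := by
    have hpt : ∀ ω, ‖Y ω‖ ^ 2 ≤ (1 + c) * ‖A ω‖ ^ 2 + 2 * τ * η ^ 2 * ‖g ω‖ ^ 2 := by
      intro ω
      have h1 : ‖Y ω‖ ≤ ‖A ω‖ + η * ‖g ω‖ := by
        calc ‖Y ω‖ ≤ ‖A ω‖ + ‖η • g ω‖ := norm_sub_le _ _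
          _ = ‖A ω‖ + η * ‖g ω‖ := by rw [norm_smul, Real.norm_eq_abs, abs_of_pos hη]
      have h2 : ‖Y ω‖ ^ 2 ≤ (‖A ω‖ + η * ‖g ω‖) ^ 2 := by
        have h0 := norm_nonneg (Y ω)
        have h0' : (0 : ℝ) ≤ ‖A ω‖ + η * ‖g ω‖ := le_trans h0 h1
        nlinarith
      have h3 : (‖A ω‖ + η * ‖g ω‖) ^ 2
          ≤ (1 + c) * ‖A ω‖ ^ 2 + 2 * τ * (η * ‖g ω‖) ^ 2 := by
        rw [hc]
        exact young_aux (τ : ℝ) _ _ hτ1 (norm_nonneg _)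
          (mul_nonneg hη.le (norm_nonneg _))
      calc ‖Y ω‖ ^ 2 ≤ (1 + c) * ‖A ω‖ ^ 2 + 2 * τ * (η * ‖g ω‖) ^ 2 := le_trans h2 h3
        _ = (1 + c) * ‖A ω‖ ^ 2 + 2 * τ * η ^ 2 * ‖g ω‖ ^ 2 := by ring
    calc ∫ ω, ‖Y ω‖ ^ 2 ∂μ
        ≤ ∫ ω, ((1 + c) * ‖A ω‖ ^ 2 + 2 * τ * η ^ 2 * ‖g ω‖ ^ 2) ∂μ := by
          refine integral_mono (hsq Y hY2) ?_ hpt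
          exact ((hsq A hA2).const_mul _).add ((hsq g hg2).const_mul _)
      _ = (1 + c) * ∫ ω, ‖A ω‖ ^ 2 ∂μ + 2 * τ * η ^ 2 * ∫ ω, ‖g ω‖ ^ 2 ∂μ := by
          have iA : Integrable (fun ω => (1 + c) * ‖A ω‖ ^ 2) μ := (hsq A hA2).const_mul _
          have ig : Integrable (fun ω => 2 * τ * η ^ 2 * ‖g ω‖ ^ 2) μ :=
            (hsq g hg2).const_mul _
          rw [integral_add iA ig, integral_const_mul, integral_const_mul]
  -- bound on the gradient term
  have hgbound : ∫ ω, ‖g ω‖ ^ 2 ∂μ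
      ≤ 3 * L ^ 2 * ∫ ω, ‖A ω‖ ^ 2 ∂μ + 3 * σ ^ 2 + 3 * ∫ ω, ‖X 0 ω‖ ^ 2 ∂μ := by
    have hpt : ∀ ω, ‖g ω‖ ^ 2 ≤ 3 * (L * ‖A ω‖) ^ 2 + 3 * ‖D0 ω‖ ^ 2 + 3 * ‖X 0 ω‖ ^ 2 := by
      intro ω
      have h1 : ‖g ω‖ ≤ L * ‖A ω‖ + ‖D0 ω‖ + ‖X 0 ω‖ := by
        calc ‖g ω‖ = ‖(h (v r ω) - h (v 0 ω)) + (h (v 0 ω) - X 0 ω) + X 0 ω‖ := by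
              simp only [hg]; congr 1; abel
          _ ≤ ‖h (v r ω) - h (v 0 ω)‖ + ‖h (v 0 ω) - X 0 ω‖ + ‖X 0 ω‖ := by
              exact le_trans (norm_add_le _ _) (by gcongr; exact norm_add_le _ _)
          _ ≤ L * ‖A ω‖ + ‖D0 ω‖ + ‖X 0 ω‖ := by
              gcongr
              · exact hLip _ _
              · rw [norm_sub_rev]
      exact sq_le_three_aux _ _ _ _ (norm_nonneg _)
        (mul_nonneg hL.le (norm_nonneg _)) (norm_nonneg _) (norm_nonneg _) h1
    have hint1 : Integrable (fun ω => 3 * (L * ‖A ω‖) ^ 2 + 3 * ‖D0 ω‖ ^ 2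
        + 3 * ‖X 0 ω‖ ^ 2) μ := by
      have : Integrable (fun ω => 3 * L ^ 2 * ‖A ω‖ ^ 2) μ := (hsq A hA2).const_mul _
      refine Integrable.add (Integrable.add ?_ ((hsq D0 hD02).const_mul 3))
        ((hsq (X 0) (hX2 0)).const_mul 3)
      exact this.congr (Filter.Eventually.of_forall fun ω => by ring)
    calc ∫ ω, ‖g ω‖ ^ 2 ∂μ
        ≤ ∫ ω, (3 * (L * ‖A ω‖) ^ 2 + 3 * ‖D0 ω‖ ^ 2 + 3 * ‖X 0 ω‖ ^ 2) ∂μ :=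
          integral_mono (hsq g hg2) hint1 hpt
      _ = 3 * L ^ 2 * ∫ ω, ‖A ω‖ ^ 2 ∂μ + 3 * ∫ ω, ‖D0 ω‖ ^ 2 ∂μ
            + 3 * ∫ ω, ‖X 0 ω‖ ^ 2 ∂μ := by
          have h3 : ∀ ω, 3 * (L * ‖A ω‖) ^ 2 = 3 * L ^ 2 * ‖A ω‖ ^ 2 := fun ω => by ring
          simp_rw [h3]
          have iA : Integrable (fun ω => 3 * L ^ 2 * ‖A ω‖ ^ 2) μ := (hsq A hA2).const_mul _
          have iD0 : Integrable (fun ω => 3 * ‖D0 ω‖ ^ 2) μ := (hsq D0 hD02).const_mul 3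
          have iX0 : Integrable (fun ω => 3 * ‖X 0 ω‖ ^ 2) μ := (hsq (X 0) (hX2 0)).const_mul 3
          have iAD : Integrable (fun ω => 3 * L ^ 2 * ‖A ω‖ ^ 2 + 3 * ‖D0 ω‖ ^ 2) μ := iA.add iD0
          rw [integral_add iAD iX0, integral_add iA iD0,
            integral_const_mul, integral_const_mul, integral_const_mul]
      _ ≤ 3 * L ^ 2 * ∫ ω, ‖A ω‖ ^ 2 ∂μ + 3 * σ ^ 2 + 3 * ∫ ω, ‖X 0 ω‖ ^ 2 ∂μ := by
          have hv0' : ∫ ω, ‖D0 ω‖ ^ 2 ∂μ ≤ σ ^ 2 := hvar 0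
          linarith
  -- variance bound on D
  have hDvar : ∫ ω, ‖D ω‖ ^ 2 ∂μ ≤ σ ^ 2 := hvar r
  -- assemble
  set IA := ∫ ω, ‖A ω‖ ^ 2 ∂μ
  set IX := ∫ ω, ‖X 0 ω‖ ^ 2 ∂μ
  have hIA : 0 ≤ IA := integral_nonneg fun ω => sq_nonneg _
  have hIg : 0 ≤ ∫ ω, ‖g ω‖ ^ 2 ∂μ := integral_nonneg fun ω => sq_nonneg _
  have hη2 : (0:ℝ) ≤ η ^ 2 := sq_nonneg η
  have hτ0 : (0:ℝ) ≤ 2 * (τ : ℝ) * η ^ 2 := by positivity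
  calc ∫ ω, ‖v (r + 1) ω - v 0 ω‖ ^ 2 ∂μ
      = ∫ ω, ‖Y ω‖ ^ 2 ∂μ + η ^ 2 * ∫ ω, ‖D ω‖ ^ 2 ∂μ := hexp
    _ ≤ ((1 + c) * IA + 2 * τ * η ^ 2 * ∫ ω, ‖g ω‖ ^ 2 ∂μ) + η ^ 2 * σ ^ 2 :=
        add_le_add hyoung (mul_le_mul_of_nonneg_left hDvar hη2)
    _ ≤ ((1 + c) * IA + 2 * τ * η ^ 2 * (3 * L ^ 2 * IA + 3 * σ ^ 2 + 3 * IX))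
          + η ^ 2 * σ ^ 2 := by
        have h2 : 2 * (τ : ℝ) * η ^ 2 * (∫ ω, ‖g ω‖ ^ 2 ∂μ)
            ≤ 2 * (τ : ℝ) * η ^ 2 * (3 * L ^ 2 * IA + 3 * σ ^ 2 + 3 * IX) :=
          mul_le_mul_of_nonneg_left hgbound hτ0
        linarith
    _ = (1 + c + 6 * η ^ 2 * τ * L ^ 2) * IA + (η ^ 2 + 6 * η ^ 2 * τ) * σ ^ 2
          + 6 * η ^ 2 * τ * IX := by ring
end

section
/- Let N ≥ 2 and let P be an N×N doubly stochastic matrix (all entries nonnegative, every row and every column sums to 1) all of whose entries are at least p, where 0 < p < 1. Then for every integer k ≥ 1 and all indices i, j ∈ {1,…,N}: |1/N − (P^k)_{ij}| ≤ 2·((1 + p^{−N})/(1 − p^{N}))·(1 − p^{N})^{k/N}. -/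
open Finset

/-- Nedić–Ozdaglar geometric mixing bound for powers of a doubly
stochastic matrix with entries bounded below by `p`. -/
theorem stmt8 (N : ℕ) (hN : 2 ≤ N) (P : Matrix (Fin N) (Fin N) ℝ)
    (hPnn : ∀ i j, 0 ≤ P i j)
    (hProw : ∀ i, ∑ j, P i j = 1) (hPcol : ∀ j, ∑ i, P i j = 1)
    (p : ℝ) (hp0 : 0 < p) (hp1 : p < 1) (hpP : ∀ i j, p ≤ P i j) :
    ∀ k : ℕ, 1 ≤ k → ∀ i j : Fin N,
      |1 / (N : ℝ) - (P ^ k) i j| ≤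
        2 * ((1 + p ^ (-(N : ℝ))) / (1 - p ^ N)) * (1 - p ^ N) ^ ((k : ℝ) / (N : ℝ)) := by
  have hNpos : 0 < N := by omega
  have hNe : Nonempty (Fin N) := ⟨⟨0, hNpos⟩⟩
  have hN1 : (1 : ℝ) ≤ (N : ℝ) := by exact_mod_cast hNpos
  set q : ℝ := 1 - (N : ℝ) * p with hqdef
  have hNp_le : (N : ℝ) * p ≤ 1 := by
    have h := hProw ⟨0, hNpos⟩
    calc (N : ℝ) * p = ∑ _j : Fin N, p := by simp [mul_comm]
      _ ≤ ∑ j, P ⟨0, hNpos⟩ j := Finset.sum_le_sum fun j _ => hpP _ j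
      _ = 1 := h
  have hq0 : 0 ≤ q := by simp only [hqdef]; linarith
  have hq1 : q ≤ 1 - p := by
    have : p ≤ (N : ℝ) * p := by nlinarith
    simp only [hqdef]; linarith
  -- column sums of P^k are 1
  have colsum : ∀ k : ℕ, ∀ j, ∑ i, (P ^ k) i j = 1 := by
    intro k
    induction k with
    | zero => intro j; simp [Matrix.one_apply]
    | succ k ih =>
      intro j
      rw [pow_succ]
      simp only [Matrix.mul_apply]
      rw [Finset.sum_comm]
      simp only [← Finset.sum_mul, ih]
      simp [hPcol j]
  -- entries of P^k are nonnegative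
  have nonneg : ∀ k : ℕ, ∀ i j, 0 ≤ (P ^ k) i j := by
    intro k
    induction k with
    | zero => intro i j; simp only [pow_zero, Matrix.one_apply]; split <;> norm_num
    | succ k ih =>
      intro i j
      rw [pow_succ, Matrix.mul_apply]
      exact Finset.sum_nonneg fun l _ => mul_nonneg (ih i l) (hPnn l j)
  set M : ℕ → Fin N → ℝ := fun k j => Finset.univ.sup' Finset.univ_nonempty
    (fun i => (P ^ k) i j) with hM
  set m : ℕ → Fin N → ℝ := fun k j => Finset.univ.inf' Finset.univ_nonempty
    (fun i => (P ^ k) i j) with hm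
  have hle_sup : ∀ k i j, (P ^ k) i j ≤ M k j := fun k i j =>
    Finset.le_sup' (fun i => (P ^ k) i j) (Finset.mem_univ i)
  have hinf_le : ∀ k i j, m k j ≤ (P ^ k) i j := fun k i j =>
    Finset.inf'_le (fun i => (P ^ k) i j) (Finset.mem_univ i)
  -- one-step bounds
  have upper : ∀ k j i, (P ^ (k + 1)) i j ≤ q * M k j + p := by
    intro k j i
    have hrw : (P ^ (k + 1)) i j = ∑ l, P i l * (P ^ k) l j := by
      rw [pow_succ']; rfl
    rw [hrw]
    have h1 : ∀ l, P i l * (P ^ k) l j = (P i l - p) * (P ^ k) l j + p * (P ^ k) l j := by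
      intro l; ring
    rw [Finset.sum_congr rfl fun l _ => h1 l, Finset.sum_add_distrib, ← Finset.mul_sum,
      colsum k j, mul_one]
    have h2 : ∑ l, (P i l - p) * (P ^ k) l j ≤ ∑ l, (P i l - p) * M k j := by
      refine Finset.sum_le_sum fun l _ => ?_
      exact mul_le_mul_of_nonneg_left (hle_sup k l j) (by linarith [hpP i l])
    have h3 : ∑ l, (P i l - p) * M k j = q * M k j := by
      rw [← Finset.sum_mul, Finset.sum_sub_distrib, hProw i]
      simp [hqdef, mul_comm]
    linarith [h2, h3.symm ▸ h2]
  have lower : ∀ k j i, q * m k j + p ≤ (P ^ (k + 1)) i j := by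
    intro k j i
    have hrw : (P ^ (k + 1)) i j = ∑ l, P i l * (P ^ k) l j := by
      rw [pow_succ']; rfl
    rw [hrw]
    have h1 : ∀ l, P i l * (P ^ k) l j = (P i l - p) * (P ^ k) l j + p * (P ^ k) l j := by
      intro l; ring
    rw [Finset.sum_congr rfl fun l _ => h1 l, Finset.sum_add_distrib, ← Finset.mul_sum,
      colsum k j, mul_one]
    have h2 : ∑ l, (P i l - p) * m k j ≤ ∑ l, (P i l - p) * (P ^ k) l j := by
      refine Finset.sum_le_sum fun l _ => ?_
      exact mul_le_mul_of_nonneg_left (hinf_le k l j) (by linarith [hpP i l])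
    have h3 : ∑ l, (P i l - p) * m k j = q * m k j := by
      rw [← Finset.sum_mul, Finset.sum_sub_distrib, hProw i]
      simp [hqdef, mul_comm]
    linarith [h2, h3 ▸ h2]
  -- gap contraction
  have gap : ∀ k : ℕ, ∀ j, M k j - m k j ≤ q ^ k := by
    intro k
    induction k with
    | zero =>
      intro j
      have hMle : M 0 j ≤ 1 := by
        apply Finset.sup'_le
        intro i _
        simp only [pow_zero, Matrix.one_apply]
        split <;> norm_num
      have hmge : 0 ≤ m 0 j := by
        apply Finset.le_inf'
        intro i _
        exact nonneg 0 i j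
      simpa using by linarith
    | succ k ih =>
      intro j
      have hMs : M (k + 1) j ≤ q * M k j + p := by
        apply Finset.sup'_le
        intro i _
        exact upper k j i
      have hms : q * m k j + p ≤ m (k + 1) j := by
        apply Finset.le_inf'
        intro i _
        exact lower k j i
      have : M (k + 1) j - m (k + 1) j ≤ q * (M k j - m k j) := by linarith
      calc M (k + 1) j - m (k + 1) j ≤ q * (M k j - m k j) := this
        _ ≤ q * q ^ k := mul_le_mul_of_nonneg_left (ih j) hq0
        _ = q ^ (k + 1) := (pow_succ' q k).symm
  -- pointwise bound
  have bound : ∀ k : ℕ, ∀ i j, |1 / (N : ℝ) - (P ^ k) i j| ≤ q ^ k := by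
    intro k i j
    have h1 := hinf_le k i j
    have h2 := hle_sup k i j
    have hNR : (0 : ℝ) < (N : ℝ) := by exact_mod_cast hNpos
    have h3 : m k j ≤ 1 / (N : ℝ) := by
      rw [le_div_iff₀ hNR]
      calc m k j * (N : ℝ) = ∑ _i : Fin N, m k j := by simp [mul_comm]
        _ ≤ ∑ i, (P ^ k) i j := Finset.sum_le_sum fun i _ => hinf_le k i j
        _ = 1 := colsum k j
    have h4 : 1 / (N : ℝ) ≤ M k j := by
      rw [div_le_iff₀ hNR]
      calc (1 : ℝ) = ∑ i, (P ^ k) i j := (colsum k j).symm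
        _ ≤ ∑ _i : Fin N, M k j := Finset.sum_le_sum fun i _ => hle_sup k i j
        _ = M k j * (N : ℝ) := by simp [mul_comm]
    have hg := gap k j
    rw [abs_le]
    constructor <;> linarith
  -- final chain
  intro k hk i j
  have hpNpos : 0 < p ^ N := pow_pos hp0 N
  have hpNlt : p ^ N < 1 := pow_lt_one₀ hp0.le hp1 (by omega)
  have hd : 0 < 1 - p ^ N := by linarith
  have hpNp : p ^ N ≤ p := by
    calc p ^ N ≤ p ^ 1 := pow_le_pow_of_le_one hp0.le hp1.le (by omega)
      _ = p := pow_one p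
  have hqN : q ≤ 1 - p ^ N := by linarith
  have hNne : (N : ℝ) ≠ 0 := by positivity
  have key : q ≤ (1 - p ^ N) ^ ((1 : ℝ) / (N : ℝ)) := by
    have hqNpow : q ^ N ≤ 1 - p ^ N := by
      calc q ^ N ≤ q ^ 1 := pow_le_pow_of_le_one hq0 (by linarith) (by omega)
        _ = q := pow_one q
        _ ≤ 1 - p ^ N := hqN
    have h := Real.rpow_le_rpow (by positivity) hqNpow
      (by positivity : (0 : ℝ) ≤ 1 / (N : ℝ))
    rwa [← Real.rpow_natCast q N, ← Real.rpow_mul hq0, mul_one_div,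
      div_self hNne, Real.rpow_one] at h
  have hqk : q ^ k ≤ (1 - p ^ N) ^ ((k : ℝ) / (N : ℝ)) := by
    calc q ^ k ≤ ((1 - p ^ N) ^ ((1 : ℝ) / (N : ℝ))) ^ k :=
          pow_le_pow_left₀ hq0 key k
      _ = (1 - p ^ N) ^ ((k : ℝ) / (N : ℝ)) := by
          rw [← Real.rpow_natCast ((1 - p ^ N) ^ ((1 : ℝ) / (N : ℝ))) k,
            ← Real.rpow_mul hd.le, one_div, inv_mul_eq_div]
  have hx : 0 < p ^ (-(N : ℝ)) := Real.rpow_pos_of_pos hp0 _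
  have hC : 1 ≤ 2 * ((1 + p ^ (-(N : ℝ))) / (1 - p ^ N)) := by
    have h2 : 1 ≤ (1 + p ^ (-(N : ℝ))) / (1 - p ^ N) := by
      rw [le_div_iff₀ hd]; nlinarith
    linarith
  calc |1 / (N : ℝ) - (P ^ k) i j| ≤ q ^ k := bound k i j
    _ ≤ (1 - p ^ N) ^ ((k : ℝ) / (N : ℝ)) := hqk
    _ ≤ 2 * ((1 + p ^ (-(N : ℝ))) / (1 - p ^ N)) * (1 - p ^ N) ^ ((k : ℝ) / (N : ℝ)) :=
        le_mul_of_one_le_left (Real.rpow_nonneg hd.le _) hC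
end

section
/- Let N ≥ 1, let P be an N×N doubly stochastic matrix, let V be a real normed space, η ∈ ℝ, and suppose all initial vectors are equal: w_1(0) = … = w_N(0) ∈ V. Let g_j(r) ∈ V for j ∈ {1,…,N}, r ≥ 0, and define w_i(t+1) := ∑_{j=1}^N P_{ij}·(w_j(t) − η g_j(t)) and w̄(t) := (1/N)∑_{j=1}^N w_j(t). Assume there are constants D ≥ 0 and q ∈ [0,1) with |(P^m)_{ij} − 1/N| ≤ D·q^m for all integers m ≥ 1 and all i, j. Then for every k ≥ 1 and every i: ‖w_i(k) − w̄(k)‖ ≤ |η|·D·∑_{r=0}^{k−1} q^{k−r}·∑_{j=1}^N ‖g_j(r)‖. -/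
/-- norm bound on the consensus deviation of the gossip/gradient
recursion under a geometric mixing bound, with equal initialization. -/
theorem stmt10 {V : Type*} [NormedAddCommGroup V] [NormedSpace ℝ V]
    (N : ℕ) (hN : 1 ≤ N) (P : Matrix (Fin N) (Fin N) ℝ)
    (hPnn : ∀ i j, 0 ≤ P i j)
    (hProw : ∀ i, ∑ j, P i j = 1) (hPcol : ∀ j, ∑ i, P i j = 1)
    (η : ℝ) (w : ℕ → Fin N → V) (g : ℕ → Fin N → V)
    (hinit : ∀ i j, w 0 i = w 0 j)
    (hrec : ∀ t i, w (t + 1) i = ∑ j, P i j • (w t j - η • g t j))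
    (wbar : ℕ → V) (hwbar : ∀ t, wbar t = (N : ℝ)⁻¹ • ∑ j, w t j)
    (D q : ℝ) (hD : 0 ≤ D) (hq0 : 0 ≤ q) (hq1 : q < 1)
    (hmix : ∀ m : ℕ, 1 ≤ m → ∀ i j, |(P ^ m) i j - 1 / (N : ℝ)| ≤ D * q ^ m) :
    ∀ k : ℕ, 1 ≤ k → ∀ i,
      ‖w k i - wbar k‖ ≤
        |η| * D * ∑ r ∈ Finset.range k, q ^ (k - r) * ∑ j, ‖g r j‖ := by
  have hNpos : (0:ℝ) < (N:ℝ) := by exact_mod_cast hN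
  -- swapping lemma
  have swap : ∀ (i : Fin N) (Q : Matrix (Fin N) (Fin N) ℝ) (v : Fin N → V),
      ∑ j, P i j • ∑ l, Q j l • v l = ∑ l, ((P * Q) i l) • v l := by
    intro i Q v
    simp only [Finset.smul_sum, Matrix.mul_apply, Finset.sum_smul, mul_smul]
    exact Finset.sum_comm
  -- row sums of powers of P are 1
  have rowone : ∀ m : ℕ, ∀ i, ∑ j, (P ^ m) i j = 1 := by
    intro m
    induction m with
    | zero => intro i; simp [Matrix.one_apply]
    | succ m ih =>
      intro i
      rw [pow_succ']
      simp only [Matrix.mul_apply]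
      rw [Finset.sum_comm]
      calc ∑ x, ∑ j, P i x * (P ^ m) x j
          = ∑ x, P i x * ∑ j, (P ^ m) x j := by
            simp [Finset.mul_sum]
        _ = ∑ x, P i x := by simp [ih]
        _ = 1 := hProw i
  -- closed form for w
  have hA : ∀ k : ℕ, ∀ i, w k i =
      (∑ j, (P ^ k) i j • w 0 j)
        - η • ∑ r ∈ Finset.range k, ∑ j, (P ^ (k - r)) i j • g r j := by
    intro k
    induction k with
    | zero => intro i; simp [Matrix.one_apply]
    | succ k ih =>
      intro i
      rw [hrec]
      have step : ∀ j, P i j • (w k j - η • g k j)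
          = P i j • w k j - η • (P i j • g k j) := by
        intro j
        rw [smul_sub, smul_comm]
      simp only [step, Finset.sum_sub_distrib, ← Finset.smul_sum]
      have h1 : ∑ j, P i j • w k j
          = (∑ l, (P ^ (k+1)) i l • w 0 l)
            - η • ∑ r ∈ Finset.range k, ∑ l, (P ^ (k+1-r)) i l • g r l := by
        calc ∑ j, P i j • w k j
            = ∑ j, P i j • ((∑ l, (P ^ k) j l • w 0 l)
                - η • ∑ r ∈ Finset.range k, ∑ l, (P ^ (k - r)) j l • g r l) := by
              simp only [← ih]
          _ = (∑ j, P i j • ∑ l, (P ^ k) j l • w 0 l)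
              - η • ∑ j, P i j • ∑ r ∈ Finset.range k, ∑ l, (P ^ (k - r)) j l • g r l := by
              have h2 : ∀ j, P i j • ((∑ l, (P ^ k) j l • w 0 l)
                  - η • ∑ r ∈ Finset.range k, ∑ l, (P ^ (k - r)) j l • g r l)
                  = P i j • (∑ l, (P ^ k) j l • w 0 l)
                    - η • (P i j • ∑ r ∈ Finset.range k, ∑ l, (P ^ (k - r)) j l • g r l) := by
                intro j; rw [smul_sub, smul_comm]
              simp only [h2, Finset.sum_sub_distrib, ← Finset.smul_sum]
          _ = (∑ l, ((P * P ^ k) i l) • w 0 l)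
              - η • ∑ r ∈ Finset.range k, ∑ j, P i j • ∑ l, (P ^ (k - r)) j l • g r l := by
              rw [swap]
              congr 2
              simp only [Finset.smul_sum]
              exact Finset.sum_comm
          _ = (∑ l, (P ^ (k+1)) i l • w 0 l)
              - η • ∑ r ∈ Finset.range k, ∑ l, ((P * P ^ (k - r)) i l) • g r l := by
              rw [← pow_succ']
              congr 2
              exact Finset.sum_congr rfl fun r _ => swap i _ _
          _ = (∑ l, (P ^ (k+1)) i l • w 0 l)
              - η • ∑ r ∈ Finset.range k, ∑ l, (P ^ (k+1-r)) i l • g r l := by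
              congr 2
              refine Finset.sum_congr rfl fun r hr => ?_
              have hrk : r < k := Finset.mem_range.mp hr
              have : k + 1 - r = (k - r) + 1 := by omega
              rw [this, pow_succ']
      rw [h1]
      rw [Finset.sum_range_succ]
      have hP1 : (P ^ (k + 1 - k)) = P := by
        have : k + 1 - k = 1 := by omega
        rw [this, pow_one]
      rw [hP1, smul_add]
      abel
  -- sum of w
  have hS : ∀ k : ℕ, ∑ j, w k j
      = (∑ j, w 0 j) - η • ∑ r ∈ Finset.range k, ∑ j, g r j := by
    intro k
    induction k with
    | zero => simp
    | succ k ih =>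
      have h1 : ∑ i, w (k+1) i = ∑ j, (w k j - η • g k j) := by
        simp only [hrec]
        rw [Finset.sum_comm]
        refine Finset.sum_congr rfl fun j _ => ?_
        rw [← Finset.sum_smul, hPcol j, one_smul]
      rw [h1, Finset.sum_sub_distrib, ih, Finset.sum_range_succ, smul_add,
        ← Finset.smul_sum]
      abel
  intro k hk i
  set c := w 0 i with hc
  have hconst : ∀ j, w 0 j = c := fun j => hinit j i
  -- w k i
  have hwki : w k i = c - η • ∑ r ∈ Finset.range k, ∑ j, (P ^ (k - r)) i j • g r j := by
    rw [hA k i]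
    congr 1
    simp only [hconst, ← Finset.sum_smul, rowone, one_smul]
  -- wbar k
  have hwbark : wbar k = c - η • (N:ℝ)⁻¹ • ∑ r ∈ Finset.range k, ∑ j, g r j := by
    rw [hwbar, hS]
    rw [smul_sub]
    congr 1
    · simp only [hconst, Finset.sum_const, Finset.card_univ, Fintype.card_fin]
      rw [← Nat.cast_smul_eq_nsmul ℝ, smul_smul, inv_mul_cancel₀ (ne_of_gt hNpos), one_smul]
    · rw [smul_comm]
  -- the difference
  have hdiff : w k i - wbar k
      = η • ∑ r ∈ Finset.range k, ∑ j, ((1 / (N:ℝ)) - (P ^ (k - r)) i j) • g r j := by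
    rw [hwki, hwbark]
    have : ∑ r ∈ Finset.range k, ∑ j, ((1 / (N:ℝ)) - (P ^ (k - r)) i j) • g r j
        = ((N:ℝ)⁻¹ • ∑ r ∈ Finset.range k, ∑ j, g r j)
          - ∑ r ∈ Finset.range k, ∑ j, (P ^ (k - r)) i j • g r j := by
      rw [Finset.smul_sum, ← Finset.sum_sub_distrib]
      refine Finset.sum_congr rfl fun r _ => ?_
      rw [Finset.smul_sum, ← Finset.sum_sub_distrib]
      refine Finset.sum_congr rfl fun j _ => ?_
      rw [sub_smul, one_div]
    rw [this, smul_sub]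
    abel
  rw [hdiff, norm_smul, Real.norm_eq_abs]
  have hbound : ‖∑ r ∈ Finset.range k, ∑ j, ((1 / (N:ℝ)) - (P ^ (k - r)) i j) • g r j‖
      ≤ D * ∑ r ∈ Finset.range k, q ^ (k - r) * ∑ j, ‖g r j‖ := by
    rw [Finset.mul_sum]
    refine (norm_sum_le _ _).trans (Finset.sum_le_sum fun r hr => ?_)
    have hrk : r < k := Finset.mem_range.mp hr
    have hm : 1 ≤ k - r := by omega
    refine (norm_sum_le _ _).trans ?_
    rw [← mul_assoc, Finset.mul_sum]
    refine Finset.sum_le_sum fun j _ => ?_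
    rw [norm_smul, Real.norm_eq_abs, abs_sub_comm]
    exact mul_le_mul_of_nonneg_right (hmix (k - r) hm i j) (norm_nonneg _)
  calc |η| * ‖∑ r ∈ Finset.range k, ∑ j, ((1 / (N:ℝ)) - (P ^ (k - r)) i j) • g r j‖
      ≤ |η| * (D * ∑ r ∈ Finset.range k, q ^ (k - r) * ∑ j, ‖g r j‖) :=
        mul_le_mul_of_nonneg_left hbound (abs_nonneg η)
    _ = |η| * D * ∑ r ∈ Finset.range k, q ^ (k - r) * ∑ j, ‖g r j‖ := by ring
end

section
/- Let q ∈ (0,1), α, β, γ ≥ 0 with α/(1−q) < 1, let K ≥ 1 be an integer, and let A_0, …, A_{K−1} and B_0, …, B_{K−1} be nonnegative real numbers with A_0 = 0 and, for every 1 ≤ k ≤ K−1, A_k ≤ α·∑_{r=0}^{k−1} q^{k−r}·A_r + β·∑_{r=0}^{k−1} q^{k−r}·B_r + γ. Then ∑_{k=0}^{K−1} A_k ≤ ( (β/(1−q))·∑_{r=0}^{K−1} B_r + (K−1)·γ ) / (1 − α/(1−q)). -/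
lemma geom_tail_le (q : ℝ) (hq0 : 0 < q) (hq1 : q < 1) (r K : ℕ) :
    ∑ k ∈ Finset.Ico (r + 1) K, q ^ (k - r) ≤ 1 / (1 - q) := by
  rw [Finset.sum_Ico_eq_sum_range]
  have h1q : (0:ℝ) < 1 - q := by linarith
  have h : ∀ j ∈ Finset.range (K - (r+1)), q ^ (r + 1 + j - r) = q * q ^ j := by
    intro j _
    have : r + 1 + j - r = j + 1 := by omega
    rw [this, pow_succ]; ring
  rw [Finset.sum_congr rfl h, ← Finset.mul_sum]
  have hgeom : ∑ j ∈ Finset.range (K - (r+1)), q ^ j ≤ 1 / (1 - q) := by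
    rw [geom_sum_eq (by linarith : q ≠ 1)]
    have hqn : (0:ℝ) ≤ q ^ (K - (r+1)) := by positivity
    have heq : (q ^ (K - (r+1)) - 1) / (q - 1) = (1 - q ^ (K - (r+1))) / (1 - q) := by
      rw [div_eq_div_iff (by linarith) (by linarith)]; ring
    rw [heq, div_le_div_iff₀ h1q h1q]
    nlinarith
  have hgnn : (0:ℝ) ≤ ∑ j ∈ Finset.range (K - (r+1)), q ^ j := by positivity
  nlinarith

lemma ifsum (γ : ℝ) (K : ℕ) :
    ∑ k ∈ Finset.range K, (if k = 0 then 0 else γ) = ((K - 1 : ℕ) : ℝ) * γ := by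
  induction K with
  | zero => simp
  | succ n ih =>
    rw [Finset.sum_range_succ, ih]
    rcases Nat.eq_zero_or_pos n with rfl | hn
    · simp
    · have h1 : ¬ (n = 0) := by omega
      simp only [h1, if_false]
      have h2 : (n + 1 - 1 : ℕ) = (n - 1 : ℕ) + 1 := by omega
      rw [h2]
      push_cast
      ring

lemma swap_sum (K : ℕ) (f : ℕ → ℕ → ℝ) :
    ∑ k ∈ Finset.range K, ∑ r ∈ Finset.range k, f k r
      = ∑ r ∈ Finset.range K, ∑ k ∈ Finset.Ico (r + 1) K, f k r := by
  refine Finset.sum_comm' ?_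
  intro k r
  simp only [Finset.mem_range, Finset.mem_Ico]
  omega

/-- resolution of the geometrically weighted consensus-error recursion. -/
theorem stmt13 (q : ℝ) (hq0 : 0 < q) (hq1 : q < 1)
    (α β γ : ℝ) (hα : 0 ≤ α) (hβ : 0 ≤ β) (hγ : 0 ≤ γ) (hαq : α / (1 - q) < 1)
    (K : ℕ) (hK : 1 ≤ K) (A B : ℕ → ℝ)
    (hA0 : A 0 = 0) (hAnn : ∀ k < K, 0 ≤ A k) (hBnn : ∀ k < K, 0 ≤ B k)
    (hrec : ∀ k : ℕ, 1 ≤ k → k ≤ K - 1 →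
      A k ≤ α * ∑ r ∈ Finset.range k, q ^ (k - r) * A r
        + β * ∑ r ∈ Finset.range k, q ^ (k - r) * B r + γ) :
    ∑ k ∈ Finset.range K, A k ≤
      ((β / (1 - q)) * ∑ r ∈ Finset.range K, B r + ((K : ℝ) - 1) * γ)
        / (1 - α / (1 - q)) := by
  have h1q : (0:ℝ) < 1 - q := by linarith
  set S := ∑ k ∈ Finset.range K, A k with hS
  set SB := ∑ r ∈ Finset.range K, B r with hSB
  have hSnn : 0 ≤ S := Finset.sum_nonneg fun k hk => hAnn k (Finset.mem_range.mp hk)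
  have hSBnn : 0 ≤ SB := Finset.sum_nonneg fun k hk => hBnn k (Finset.mem_range.mp hk)
  -- swap-sum bound for a nonnegative sequence C
  have key : ∀ C : ℕ → ℝ, (∀ k < K, 0 ≤ C k) →
      ∑ k ∈ Finset.range K, ∑ r ∈ Finset.range k, q ^ (k - r) * C r
        ≤ (1 / (1 - q)) * ∑ r ∈ Finset.range K, C r := by
    intro C hC
    rw [swap_sum]
    rw [Finset.mul_sum]
    refine Finset.sum_le_sum fun r hr => ?_
    have hCr := hC r (Finset.mem_range.mp hr)
    calc ∑ k ∈ Finset.Ico (r + 1) K, q ^ (k - r) * C r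
        = (∑ k ∈ Finset.Ico (r + 1) K, q ^ (k - r)) * C r := by
          rw [Finset.sum_mul]
      _ ≤ (1 / (1 - q)) * C r := by
          exact mul_le_mul_of_nonneg_right (geom_tail_le q hq0 hq1 r K) hCr
  -- pointwise recursion bound for all k < K (k = 0 trivially)
  have hrec' : ∀ k < K,
      A k ≤ α * ∑ r ∈ Finset.range k, q ^ (k - r) * A r
        + β * ∑ r ∈ Finset.range k, q ^ (k - r) * B r + γ := by
    intro k hk
    rcases Nat.eq_zero_or_pos k with rfl | hk1
    · simp [hA0]; positivity
    · exact hrec k hk1 (by omega)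
  -- But for k=0 the bound gives γ extra; instead sum over k ≥ 1 only.
  have hsplit : S = ∑ k ∈ Finset.range K, (if k = 0 then 0 else A k) := by
    refine Finset.sum_congr rfl fun k _ => ?_
    split_ifs with h
    · rw [h, hA0]
    · rfl
  have hmain : S ≤ α * ((1 / (1 - q)) * S) + β * ((1 / (1 - q)) * SB)
      + ((K : ℝ) - 1) * γ := by
    have hstep : S ≤ ∑ k ∈ Finset.range K,
        ((α * ∑ r ∈ Finset.range k, q ^ (k - r) * A r
          + β * ∑ r ∈ Finset.range k, q ^ (k - r) * B r)
          + (if k = 0 then 0 else γ)) := by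
      rw [hsplit]
      refine Finset.sum_le_sum fun k hk => ?_
      split_ifs with h
      · subst h
        simp only [Finset.range_zero, Finset.sum_empty, mul_zero, add_zero, zero_add]
        exact le_rfl
      · have hkK := Finset.mem_range.mp hk
        have := hrec k (by omega) (by omega)
        linarith
    rw [Finset.sum_add_distrib, Finset.sum_add_distrib] at hstep
    have hγsum : ∑ k ∈ Finset.range K, (if k = 0 then 0 else γ)
        = ((K : ℝ) - 1) * γ := by
      rw [ifsum]
      have : ((K - 1 : ℕ) : ℝ) = (K : ℝ) - 1 := by
        push_cast [Nat.cast_sub hK]; ring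
      rw [this]
    rw [hγsum] at hstep
    rw [← Finset.mul_sum, ← Finset.mul_sum] at hstep
    have hA' := key A hAnn
    have hB' := key B hBnn
    have := mul_le_mul_of_nonneg_left hA' hα
    have := mul_le_mul_of_nonneg_left hB' hβ
    linarith
  -- algebraic conclusion
  have hpos : 0 < 1 - α / (1 - q) := by linarith
  rw [le_div_iff₀ hpos]
  have hα1 : α * ((1 / (1 - q)) * S) = (α / (1 - q)) * S := by
    field_simp
  have hβ1 : β * ((1 / (1 - q)) * SB) = (β / (1 - q)) * SB := by
    field_simp
  rw [hα1, hβ1] at hmain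
  nlinarith
end

section
/- Let N ≥ 1, let E and F be finite-dimensional real inner product spaces, and for i = 1,…,N let L_i : E × F → ℝ be differentiable with ‖∇_w L_i(w,v) − ∇_w L_i(w′,v)‖ ≤ L‖w − w′‖ for all w, w′ ∈ E, v ∈ F (L > 0), and satisfying the global variability bound: for all w ∈ E and v_1,…,v_N ∈ F, (1/N)∑_{i=1}^N ‖∇_w L_i(w,v_i) − (1/N)∑_{j=1}^N ∇_w L_j(w,v_j)‖² ≤ ς². Let P be an N×N doubly stochastic matrix and suppose there are C > 0 and q ∈ (0,1) with |(P^m)_{ij} − 1/N| ≤ (C/(2√2))·q^m for all m ≥ 1 and all i, j. On a probability space, let w_j(t), v_j(t) (j ∈ {1,…,N}, t ≥ 0) and g_j(t) be square-integrable random vectors (values in E, F, E respectively) such that w_1(0) = … = w_N(0) almost surely, the recursion w_i(t+1) = ∑_{j=1}^N P_{ij}·(w_j(t) − η_w·g_j(t)) holds for some η_w > 0, and E‖g_j(t) − ∇_w L_j(w_j(t), v_j(t+1))‖² ≤ σ₁² for all j, t. Set w̄(t) := (1/N)∑_j w_j(t) and ∇_w L(w,{v_j}) := (1/N)∑_j ∇_w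 L_j(w, v_j). Then for every k ≥ 1 and every i: E‖w_i(k) − w̄(k)‖² ≤ 6η_w²C²N²σ₁²/(1−q)² + 18η_w²C²N²ς²/(1−q)² + (18η_w²C²L²N/(1−q))·∑_{r=0}^{k−1} q^{k−r}·∑_{j=1}^N E‖w_j(r) − w̄(r)‖² + (18η_w²C²N²/(1−q))·∑_{r=0}^{k−1} q^{k−r}·E‖∇_w L(w̄(r), {v_j(r+1)}_{j=1}^N)‖². -/
open MeasureTheory Finset

lemma stmt14_geom (k : ℕ) {q : ℝ} (hq0 : 0 < q) (hq1 : q < 1) :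
    ∑ r ∈ Finset.range k, q ^ (k - r) ≤ (1 - q)⁻¹ := by
  have h1q : 0 < 1 - q := by linarith
  have h31 : ∑ r ∈ range k, q ^ (k - r) = ∑ r ∈ range k, q ^ (r + 1) := by
    rw [← sum_range_reflect]
    refine sum_congr rfl fun r hr => ?_
    rw [mem_range] at hr; congr 1; omega
  have h32 : ∑ r ∈ range k, q ^ (r+1) ≤ ∑ r ∈ range (k+1), q ^ r := by
    rw [Finset.sum_range_succ' (fun r => q ^ r) k]
    simp only [pow_zero]
    nlinarith [sum_nonneg (s := range k) (f := fun r => q ^ (r+1))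
      (fun r _ => pow_nonneg hq0.le _)]
  rw [h31]
  refine h32.trans ?_
  rw [geom_sum_eq (by linarith : q ≠ 1) (k+1)]
  have hqk : 0 ≤ q ^ (k+1) := pow_nonneg hq0.le _
  rw [div_le_iff_of_neg (by linarith : q - 1 < 0)]
  have hneg : (1 - q)⁻¹ * (q - 1) = -1 := by field_simp; ring
  rw [hneg]
  linarith

lemma stmt14_aux_sq {E : Type*} [NormedAddCommGroup E] [NormedSpace ℝ E]
    {N : ℕ} (k : ℕ) (q b : ℝ) (hq0 : 0 < q) (hq1 : q < 1) (hb : 0 ≤ b)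
    (a : ℕ → Fin N → ℝ) (u : ℕ → Fin N → E)
    (ha : ∀ r ∈ Finset.range k, ∀ j, |a r j| ≤ b * q ^ (k - r)) :
    ‖∑ r ∈ Finset.range k, ∑ j, a r j • u r j‖ ^ 2 ≤
      b ^ 2 * N / (1 - q) * ∑ r ∈ Finset.range k, q ^ (k - r) * ∑ j, ‖u r j‖ ^ 2 := by
  have h1q : 0 < 1 - q := by linarith
  set c : ℕ → ℝ := fun r => ∑ j, ‖u r j‖ with hc
  have hcnn : ∀ r, 0 ≤ c r := fun r => sum_nonneg fun j _ => norm_nonneg _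
  have h1 : ‖∑ r ∈ range k, ∑ j, a r j • u r j‖ ≤ b * ∑ r ∈ range k, q ^ (k - r) * c r := by
    calc ‖∑ r ∈ range k, ∑ j, a r j • u r j‖ ≤ ∑ r ∈ range k, ‖∑ j, a r j • u r j‖ :=
          norm_sum_le _ _
      _ ≤ ∑ r ∈ range k, b * q ^ (k - r) * c r := by
          refine sum_le_sum fun r hr => ?_
          calc ‖∑ j, a r j • u r j‖ ≤ ∑ j, ‖a r j • u r j‖ := norm_sum_le _ _
            _ ≤ ∑ j, b * q ^ (k - r) * ‖u r j‖ := by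
                refine sum_le_sum fun j _ => ?_
                rw [norm_smul]
                exact mul_le_mul_of_nonneg_right ((Real.norm_eq_abs _) ▸ ha r hr j)
                  (norm_nonneg _)
            _ = b * q ^ (k - r) * c r := by rw [hc, mul_sum]
      _ = b * ∑ r ∈ range k, q ^ (k - r) * c r := by
          rw [mul_sum]; exact sum_congr rfl fun r _ => by ring
  have h2 : (∑ r ∈ range k, q ^ (k - r) * c r) ^ 2 ≤
      (∑ r ∈ range k, q ^ (k - r)) * ∑ r ∈ range k, q ^ (k - r) * (c r) ^ 2 := by
    have key := sum_mul_sq_le_sq_mul_sq (range k) (fun r => Real.sqrt (q ^ (k - r)))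
      (fun r => Real.sqrt (q ^ (k - r)) * c r)
    have heq : ∀ r, Real.sqrt (q ^ (k - r)) * (Real.sqrt (q ^ (k - r)) * c r)
        = q ^ (k - r) * c r := fun r => by
      rw [← mul_assoc, Real.mul_self_sqrt (pow_nonneg hq0.le _)]
    have heq2 : ∀ r, Real.sqrt (q ^ (k - r)) ^ 2 = q ^ (k - r) := fun r =>
      Real.sq_sqrt (pow_nonneg hq0.le _)
    calc (∑ r ∈ range k, q ^ (k - r) * c r) ^ 2
        = (∑ r ∈ range k, Real.sqrt (q ^ (k-r)) * (Real.sqrt (q ^ (k-r)) * c r)) ^ 2 := by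
          simp_rw [heq]
      _ ≤ (∑ r ∈ range k, Real.sqrt (q ^ (k-r)) ^ 2) *
          ∑ r ∈ range k, (Real.sqrt (q ^ (k-r)) * c r) ^ 2 := key
      _ = (∑ r ∈ range k, q ^ (k - r)) * ∑ r ∈ range k, q ^ (k - r) * (c r) ^ 2 := by
          simp_rw [heq2, mul_pow, heq2]
  have h3 := stmt14_geom k hq0 hq1
  have hT : 0 ≤ ∑ r ∈ range k, q ^ (k - r) * c r :=
    sum_nonneg fun r _ => mul_nonneg (pow_nonneg hq0.le _) (hcnn r)
  have hcN : ∀ r, (c r) ^ 2 ≤ (N : ℝ) * ∑ j, ‖u r j‖ ^ 2 := by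
    intro r
    have := sq_sum_le_card_mul_sum_sq (s := (univ : Finset (Fin N))) (f := fun j => ‖u r j‖)
    simpa [hc] using this
  have hsum2 : ∑ r ∈ range k, q ^ (k - r) * (c r) ^ 2 ≤
      (N : ℝ) * ∑ r ∈ range k, q ^ (k - r) * ∑ j, ‖u r j‖ ^ 2 := by
    rw [mul_sum]
    refine sum_le_sum fun r _ => ?_
    calc q ^ (k-r) * (c r)^2 ≤ q ^ (k-r) * ((N:ℝ) * ∑ j, ‖u r j‖^2) :=
          mul_le_mul_of_nonneg_left (hcN r) (pow_nonneg hq0.le _)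
      _ = (N:ℝ) * (q ^ (k-r) * ∑ j, ‖u r j‖^2) := by ring
  have hS2 : ‖∑ r ∈ range k, ∑ j, a r j • u r j‖ ^ 2 ≤
      (b * ∑ r ∈ range k, q ^ (k - r) * c r) ^ 2 :=
    pow_le_pow_left₀ (norm_nonneg _) h1 2
  have hsum2' : 0 ≤ ∑ r ∈ range k, q ^ (k - r) * (c r) ^ 2 :=
    sum_nonneg fun r _ => mul_nonneg (pow_nonneg hq0.le _) (sq_nonneg _)
  calc ‖∑ r ∈ range k, ∑ j, a r j • u r j‖ ^ 2
      ≤ (b * ∑ r ∈ range k, q ^ (k - r) * c r) ^ 2 := hS2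
    _ = b ^ 2 * (∑ r ∈ range k, q ^ (k - r) * c r) ^ 2 := by ring
    _ ≤ b ^ 2 * ((∑ r ∈ range k, q ^ (k - r)) * ∑ r ∈ range k, q ^ (k - r) * (c r) ^ 2) :=
        mul_le_mul_of_nonneg_left h2 (by positivity)
    _ ≤ b ^ 2 * ((1-q)⁻¹ * ((N : ℝ) * ∑ r ∈ range k, q ^ (k - r) * ∑ j, ‖u r j‖ ^ 2)) := by
        refine mul_le_mul_of_nonneg_left ?_ (by positivity)
        refine mul_le_mul h3 hsum2 hsum2' (by positivity)
    _ = b ^ 2 * N / (1 - q) * ∑ r ∈ range k, q ^ (k - r) * ∑ j, ‖u r j‖ ^ 2 := by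
        field_simp

lemma stmt14_unroll {E : Type*} [NormedAddCommGroup E] [NormedSpace ℝ E]
    {N : ℕ} (P : Matrix (Fin N) (Fin N) ℝ) (w g : ℕ → Fin N → E) (ηw : ℝ)
    (hrec : ∀ t i, w (t+1) i = ∑ j, P i j • (w t j - ηw • g t j)) :
    ∀ t i, w t i = (∑ j, (P^t) i j • w 0 j)
      - ηw • ∑ r ∈ Finset.range t, ∑ j, (P^(t-r)) i j • g r j := by
  intro t
  induction t with
  | zero =>
    intro i
    simp [Matrix.one_apply]
  | succ t ih =>
    intro i
    have hPt : ∀ l, (P^(t+1)) i l = ∑ j, P i j * (P^t) j l := fun l => by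
      rw [pow_succ']; exact Matrix.mul_apply
    rw [hrec t i]
    have step1 : ∀ j : Fin N, P i j • (w t j - ηw • g t j)
        = (∑ l, (P i j * (P^t) j l) • w 0 l)
          - ηw • (∑ r ∈ range t, ∑ l, (P i j * (P^(t-r)) j l) • g r l)
          - ηw • (P i j • g t j) := by
      intro j
      rw [ih j]
      rw [smul_sub, smul_sub]
      congr 1
      · congr 1
        · rw [Finset.smul_sum]; exact sum_congr rfl fun l _ => smul_smul _ _ _
        · rw [smul_comm (P i j) ηw]
          congr 1
          rw [Finset.smul_sum]
          refine sum_congr rfl fun r _ => ?_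
          rw [Finset.smul_sum]
          exact sum_congr rfl fun l _ => smul_smul _ _ _
      · rw [smul_comm]
    rw [Finset.sum_congr rfl fun j _ => step1 j]
    rw [Finset.sum_sub_distrib, Finset.sum_sub_distrib]
    have e1 : ∑ j, ∑ l, (P i j * (P^t) j l) • w 0 l = ∑ l, (P^(t+1)) i l • w 0 l := by
      rw [Finset.sum_comm]
      refine sum_congr rfl fun l _ => ?_
      rw [hPt l, Finset.sum_smul]
    have e2 : ∑ j, ηw • (∑ r ∈ range t, ∑ l, (P i j * (P^(t-r)) j l) • g r l)
        = ηw • ∑ r ∈ range t, ∑ l, (P^(t+1-r)) i l • g r l := by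
      rw [← Finset.smul_sum]
      congr 1
      rw [Finset.sum_comm]
      refine sum_congr rfl fun r hr => ?_
      rw [Finset.sum_comm]
      refine sum_congr rfl fun l _ => ?_
      have : (P^(t+1-r)) i l = ∑ j, P i j * (P^(t-r)) j l := by
        have hrt : t + 1 - r = (t - r) + 1 := by rw [mem_range] at hr; omega
        rw [hrt, pow_succ']; exact Matrix.mul_apply
      rw [this, Finset.sum_smul]
    have e3 : ∑ j, ηw • (P i j • g t j) = ηw • ∑ l, (P^(t+1-t)) i l • g t l := by
      rw [← Finset.smul_sum]
      congr 1
      simp [pow_one]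
    rw [e1, e2, e3]
    rw [Finset.sum_range_succ (fun r => ∑ l, (P^(t+1-r)) i l • g r l) t]
    rw [smul_add]
    abel


lemma stmt14_pow_row {N : ℕ} (P : Matrix (Fin N) (Fin N) ℝ)
    (hProw : ∀ i, ∑ j, P i j = 1) : ∀ m (i' : Fin N), ∑ j, (P^m) i' j = 1 := by
  intro m
  induction m with
  | zero => intro i'; simp [Matrix.one_apply]
  | succ m ih =>
    intro i'
    have h : ∀ j, (P^(m+1)) i' j = ∑ l, P i' l * (P^m) l j := fun j => by
      rw [pow_succ']; exact Matrix.mul_apply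
    simp_rw [h]
    rw [Finset.sum_comm]
    calc ∑ l, ∑ j, P i' l * (P^m) l j = ∑ l, P i' l * ∑ j, (P^m) l j := by
          exact sum_congr rfl fun l _ => (Finset.mul_sum _ _ _).symm
      _ = ∑ l, P i' l := by simp_rw [ih]; simp
      _ = 1 := hProw i'

lemma stmt14_pow_col {N : ℕ} (P : Matrix (Fin N) (Fin N) ℝ)
    (hPcol : ∀ j, ∑ i, P i j = 1) : ∀ m (j : Fin N), ∑ i', (P^m) i' j = 1 := by
  intro m
  induction m with
  | zero => intro j; simp [Matrix.one_apply]
  | succ m ih =>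
    intro j
    have h : ∀ i', (P^(m+1)) i' j = ∑ l, P i' l * (P^m) l j := fun i' => by
      rw [pow_succ']; exact Matrix.mul_apply
    simp_rw [h]
    rw [Finset.sum_comm]
    calc ∑ l, ∑ i', P i' l * (P^m) l j = ∑ l, (∑ i', P i' l) * (P^m) l j := by
          exact sum_congr rfl fun l _ => (Finset.sum_mul _ _ _).symm
      _ = ∑ l, (P^m) l j := by simp_rw [hPcol]; simp
      _ = 1 := ih j

lemma stmt14_err_repr {E : Type*} [NormedAddCommGroup E] [NormedSpace ℝ E]
    {N : ℕ} (hN : 1 ≤ N) (P : Matrix (Fin N) (Fin N) ℝ)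
    (hProw : ∀ i, ∑ j, P i j = 1) (hPcol : ∀ j, ∑ i, P i j = 1)
    (w g : ℕ → Fin N → E) (ηw : ℝ)
    (hrec : ∀ t i, w (t+1) i = ∑ j, P i j • (w t j - ηw • g t j))
    (hinit : ∀ j j', w 0 j = w 0 j') (k : ℕ) (i : Fin N) :
    w k i - (N:ℝ)⁻¹ • ∑ j, w k j
      = -(ηw • ∑ r ∈ Finset.range k, ∑ j, ((P^(k-r)) i j - (N:ℝ)⁻¹) • g r j) := by
  have hNR : ((N:ℝ)) ≠ 0 := by positivity
  have hrowm : ∀ m (i' : Fin N), ∑ j, (P^m) i' j = 1 := by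
    intro m
    induction m with
    | zero => intro i'; simp [Matrix.one_apply]
    | succ m ih =>
      intro i'
      have : ∀ j, (P^(m+1)) i' j = ∑ l, P i' l * (P^m) l j := fun j => by
        rw [pow_succ']; exact Matrix.mul_apply
      simp_rw [this]
      rw [Finset.sum_comm]
      calc ∑ l, ∑ j, P i' l * (P^m) l j = ∑ l, P i' l * ∑ j, (P^m) l j := by
            exact sum_congr rfl fun l _ => (Finset.mul_sum _ _ _).symm
        _ = ∑ l, P i' l := by simp_rw [ih]; simp
        _ = 1 := hProw i'
  have hcolm : ∀ m (j : Fin N), ∑ i', (P^m) i' j = 1 := by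
    intro m
    induction m with
    | zero => intro j; simp [Matrix.one_apply]
    | succ m ih =>
      intro j
      have : ∀ i', (P^(m+1)) i' j = ∑ l, P i' l * (P^m) l j := fun i' => by
        rw [pow_succ']; exact Matrix.mul_apply
      simp_rw [this]
      rw [Finset.sum_comm]
      calc ∑ l, ∑ i', P i' l * (P^m) l j = ∑ l, (∑ i', P i' l) * (P^m) l j := by
            exact sum_congr rfl fun l _ => (Finset.sum_mul _ _ _).symm
        _ = ∑ l, (P^m) l j := by simp_rw [hPcol]; simp
        _ = 1 := ih j
  have hun := stmt14_unroll P w g ηw hrec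
  -- average over i
  have hwb : (N:ℝ)⁻¹ • ∑ j, w k j
      = (N:ℝ)⁻¹ • (∑ j, w 0 j)
        - ηw • ∑ r ∈ Finset.range k, (N:ℝ)⁻¹ • ∑ j, g r j := by
    have hsum : ∑ i', w k i' = (∑ j, w 0 j)
        - ηw • ∑ r ∈ Finset.range k, ∑ j, g r j := by
      calc ∑ i', w k i'
          = ∑ i', ((∑ j, (P^k) i' j • w 0 j)
            - ηw • ∑ r ∈ range k, ∑ j, (P^(k-r)) i' j • g r j) :=
            sum_congr rfl fun i' _ => hun k i'
        _ = (∑ i', ∑ j, (P^k) i' j • w 0 j)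
            - ηw • ∑ i', ∑ r ∈ range k, ∑ j, (P^(k-r)) i' j • g r j := by
            rw [Finset.sum_sub_distrib, Finset.smul_sum]
        _ = (∑ j, w 0 j) - ηw • ∑ r ∈ range k, ∑ j, g r j := by
            congr 1
            · rw [Finset.sum_comm]
              refine sum_congr rfl fun j _ => ?_
              rw [← Finset.sum_smul, hcolm k j, one_smul]
            · congr 1
              rw [Finset.sum_comm]
              refine sum_congr rfl fun r _ => ?_
              rw [Finset.sum_comm]
              refine sum_congr rfl fun j _ => ?_
              rw [← Finset.sum_smul, hcolm (k-r) j, one_smul]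
    rw [hsum, smul_sub, Finset.smul_sum, smul_comm ((N:ℝ)⁻¹) ηw]
    congr 1
    rw [Finset.smul_sum]
  rw [hun k i, hwb]
  -- initial terms cancel
  have hinit1 : ∑ j, (P^k) i j • w 0 j = w 0 i := by
    calc ∑ j, (P^k) i j • w 0 j = ∑ j, (P^k) i j • w 0 i :=
          sum_congr rfl fun j _ => by rw [hinit j i]
      _ = (∑ j, (P^k) i j) • w 0 i := (Finset.sum_smul).symm
      _ = w 0 i := by rw [hrowm k i, one_smul]
  have hinit2 : (N:ℝ)⁻¹ • (∑ j, w 0 j) = w 0 i := by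
    calc (N:ℝ)⁻¹ • (∑ j, w 0 j) = (N:ℝ)⁻¹ • (∑ j : Fin N, w 0 i) := by
          rw [Finset.sum_congr rfl fun j _ => hinit j i]
      _ = (N:ℝ)⁻¹ • ((N:ℝ) • w 0 i) := by
          rw [Finset.sum_const, card_univ, Fintype.card_fin, ← Nat.cast_smul_eq_nsmul ℝ]
      _ = w 0 i := by rw [smul_smul, inv_mul_cancel₀ hNR, one_smul]
  rw [hinit1, hinit2]
  have hsplit : ∑ r ∈ range k, ∑ j, ((P^(k-r)) i j - (N:ℝ)⁻¹) • g r j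
      = (∑ r ∈ range k, ∑ j, (P^(k-r)) i j • g r j)
        - ∑ r ∈ range k, (N:ℝ)⁻¹ • ∑ j, g r j := by
    rw [← Finset.sum_sub_distrib]
    refine sum_congr rfl fun r _ => ?_
    rw [Finset.smul_sum, ← Finset.sum_sub_distrib]
    exact sum_congr rfl fun j _ => by rw [sub_smul]
  rw [hsplit, smul_sub]
  abel

lemma stmt14_decomp {E : Type*} [NormedAddCommGroup E] [NormedSpace ℝ E]
    {N : ℕ} (a : Fin N → ℝ) (ha : ∑ j, a j = 0) (gv nv dv hv : Fin N → E) (G : E)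
    (hsum : ∀ j, gv j = nv j + dv j + hv j + G) :
    ∑ j, a j • gv j = (∑ j, a j • nv j) + (∑ j, a j • dv j) + ∑ j, a j • hv j := by
  have h : ∀ j, a j • gv j = a j • nv j + a j • dv j + a j • hv j + a j • G := by
    intro j; rw [hsum j]; module
  rw [Finset.sum_congr rfl fun j _ => h j]
  rw [Finset.sum_add_distrib, Finset.sum_add_distrib, Finset.sum_add_distrib,
    ← Finset.sum_smul, ha, zero_smul, add_zero]

set_option maxHeartbeats 2000000 in
/-- consensus-error bound for the shared-adapter iterates of PE-MA. -/
theorem stmt14 {E F : Type*}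
    [NormedAddCommGroup E] [InnerProductSpace ℝ E] [FiniteDimensional ℝ E]
    [NormedAddCommGroup F] [InnerProductSpace ℝ F] [FiniteDimensional ℝ F]
    {Ω : Type*} [MeasurableSpace Ω] (μ : Measure Ω) [IsProbabilityMeasure μ]
    (N : ℕ) (hN : 1 ≤ N)
    (Lf : Fin N → E × F → ℝ) (hdiff : ∀ i, Differentiable ℝ (Lf i))
    (gradW : Fin N → E → F → E)
    (hgradW : ∀ i w v, HasGradientAt (fun w' => Lf i (w', v)) (gradW i w v) w)
    (L : ℝ) (hL : 0 < L)
    (hLipW : ∀ i (w w' : E) (v : F), ‖gradW i w v - gradW i w' v‖ ≤ L * ‖w - w'‖)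
    (ς : ℝ)
    (hvarGlob : ∀ (w : E) (v : Fin N → F),
      (N : ℝ)⁻¹ * ∑ i, ‖gradW i w (v i) - (N : ℝ)⁻¹ • ∑ j, gradW j w (v j)‖ ^ 2 ≤ ς ^ 2)
    (P : Matrix (Fin N) (Fin N) ℝ) (hPnn : ∀ i j, 0 ≤ P i j)
    (hProw : ∀ i, ∑ j, P i j = 1) (hPcol : ∀ j, ∑ i, P i j = 1)
    (C q : ℝ) (hC : 0 < C) (hq0 : 0 < q) (hq1 : q < 1)
    (hmix : ∀ m : ℕ, 1 ≤ m → ∀ i j,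
      |(P ^ m) i j - 1 / (N : ℝ)| ≤ C / (2 * Real.sqrt 2) * q ^ m)
    (w : ℕ → Fin N → Ω → E) (v : ℕ → Fin N → Ω → F) (g : ℕ → Fin N → Ω → E)
    (hw2 : ∀ t j, MemLp (w t j) 2 μ) (hv2 : ∀ t j, MemLp (v t j) 2 μ)
    (hg2 : ∀ t j, MemLp (g t j) 2 μ)
    (ηw : ℝ) (hηw : 0 < ηw)
    (hinit : ∀ i j, w 0 i =ᵐ[μ] w 0 j)
    (hrec : ∀ t i ω, w (t + 1) i ω = ∑ j, P i j • (w t j ω - ηw • g t j ω))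
    (σ₁ : ℝ)
    (hvar : ∀ t j, ∫ ω, ‖g t j ω - gradW j (w t j ω) (v (t + 1) j ω)‖ ^ 2 ∂μ ≤ σ₁ ^ 2)
    (wbar : ℕ → Ω → E) (hwbar : ∀ t ω, wbar t ω = (N : ℝ)⁻¹ • ∑ j, w t j ω) :
    ∀ k : ℕ, 1 ≤ k → ∀ i,
      ∫ ω, ‖w k i ω - wbar k ω‖ ^ 2 ∂μ ≤
        6 * ηw ^ 2 * C ^ 2 * N ^ 2 * σ₁ ^ 2 / (1 - q) ^ 2
          + 18 * ηw ^ 2 * C ^ 2 * N ^ 2 * ς ^ 2 / (1 - q) ^ 2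
          + 18 * ηw ^ 2 * C ^ 2 * L ^ 2 * N / (1 - q) *
              ∑ r ∈ Finset.range k, q ^ (k - r) *
                ∑ j, ∫ ω, ‖w r j ω - wbar r ω‖ ^ 2 ∂μ
          + 18 * ηw ^ 2 * C ^ 2 * N ^ 2 / (1 - q) *
              ∑ r ∈ Finset.range k, q ^ (k - r) *
                ∫ ω, ‖(N : ℝ)⁻¹ • ∑ j, gradW j (wbar r ω) (v (r + 1) j ω)‖ ^ 2 ∂μ := by
  intro k hk i
  have h1q : (0:ℝ) < 1 - q := by linarith
  have hNpos : (0:ℝ) < N := by exact_mod_cast hN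
  have hIntnn : ∀ (f : Ω → E), 0 ≤ ∫ ω, ‖f ω‖^2 ∂μ :=
    fun f => integral_nonneg fun ω => sq_nonneg _
  -- RHS is nonnegative
  have hRHSnn : (0:ℝ) ≤
        6 * ηw ^ 2 * C ^ 2 * N ^ 2 * σ₁ ^ 2 / (1 - q) ^ 2
          + 18 * ηw ^ 2 * C ^ 2 * N ^ 2 * ς ^ 2 / (1 - q) ^ 2
          + 18 * ηw ^ 2 * C ^ 2 * L ^ 2 * N / (1 - q) *
              ∑ r ∈ Finset.range k, q ^ (k - r) *
                ∑ j, ∫ ω, ‖w r j ω - wbar r ω‖ ^ 2 ∂μ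
          + 18 * ηw ^ 2 * C ^ 2 * N ^ 2 / (1 - q) *
              ∑ r ∈ Finset.range k, q ^ (k - r) *
                ∫ ω, ‖(N : ℝ)⁻¹ • ∑ j, gradW j (wbar r ω) (v (r + 1) j ω)‖ ^ 2 ∂μ := by
    have t1 : (0:ℝ) ≤ 6 * ηw ^ 2 * C ^ 2 * N ^ 2 * σ₁ ^ 2 / (1 - q) ^ 2 := by positivity
    have t2 : (0:ℝ) ≤ 18 * ηw ^ 2 * C ^ 2 * N ^ 2 * ς ^ 2 / (1 - q) ^ 2 := by positivity
    have t3 : (0:ℝ) ≤ 18 * ηw ^ 2 * C ^ 2 * L ^ 2 * N / (1 - q) *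
        ∑ r ∈ Finset.range k, q ^ (k - r) * ∑ j, ∫ ω, ‖w r j ω - wbar r ω‖ ^ 2 ∂μ := by
      refine mul_nonneg (by positivity) (sum_nonneg fun r _ => mul_nonneg (by positivity)
        (sum_nonneg fun j _ => hIntnn _))
    have t4 : (0:ℝ) ≤ 18 * ηw ^ 2 * C ^ 2 * N ^ 2 / (1 - q) *
        ∑ r ∈ Finset.range k, q ^ (k - r) *
          ∫ ω, ‖(N : ℝ)⁻¹ • ∑ j, gradW j (wbar r ω) (v (r + 1) j ω)‖ ^ 2 ∂μ := by
      refine mul_nonneg (by positivity) (sum_nonneg fun r _ => mul_nonneg (by positivity)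
        (hIntnn _))
    linarith
  by_cases hN1 : N = 1
  · -- trivial case N = 1
    subst hN1
    have hz : ∀ ω, w k i ω - wbar k ω = 0 := by
      intro ω
      rw [hwbar]
      have : ∑ j, w k j ω = w k i ω := by
        rw [Fin.sum_univ_one]
        congr 1
        exact Subsingleton.elim _ _
      rw [this]
      norm_num
    have : ∫ ω, ‖w k i ω - wbar k ω‖ ^ 2 ∂μ = 0 := by
      simp [hz]
    rw [this]
    exact hRHSnn
  · have hN2 : 2 ≤ N := by omega
    -- main case: N ≥ 2
    borelize E F
    -- oscillation bound
    have hdev : ∀ (wp : E) (vt : Fin N → F) (j : Fin N),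
        ‖gradW j wp (vt j) - (N:ℝ)⁻¹ • ∑ l, gradW l wp (vt l)‖ ≤ Real.sqrt N * |ς| := by
      intro wp vt j
      have h := hvarGlob wp vt
      have hterm : ‖gradW j wp (vt j) - (N:ℝ)⁻¹ • ∑ l, gradW l wp (vt l)‖^2 ≤ N * ς^2 := by
        have hle : ‖gradW j wp (vt j) - (N:ℝ)⁻¹ • ∑ l, gradW l wp (vt l)‖^2 ≤
            ∑ i', ‖gradW i' wp (vt i') - (N:ℝ)⁻¹ • ∑ l, gradW l wp (vt l)‖^2 :=
          Finset.single_le_sum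
            (f := fun i' => ‖gradW i' wp (vt i') - (N:ℝ)⁻¹ • ∑ l, gradW l wp (vt l)‖^2)
            (fun i' _ => sq_nonneg _) (mem_univ j)
        have hmul : ∑ i', ‖gradW i' wp (vt i') - (N:ℝ)⁻¹ • ∑ l, gradW l wp (vt l)‖^2
            ≤ N * ς^2 := by
          have := mul_le_mul_of_nonneg_left h hNpos.le
          rw [← mul_assoc, mul_inv_cancel₀ hNpos.ne', one_mul] at this
          exact this
        linarith
      calc ‖gradW j wp (vt j) - (N:ℝ)⁻¹ • ∑ l, gradW l wp (vt l)‖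
          = Real.sqrt (‖gradW j wp (vt j) - (N:ℝ)⁻¹ • ∑ l, gradW l wp (vt l)‖^2) :=
            (Real.sqrt_sq (norm_nonneg _)).symm
        _ ≤ Real.sqrt ((N:ℝ) * ς^2) := Real.sqrt_le_sqrt hterm
        _ = Real.sqrt N * |ς| := by rw [Real.sqrt_mul hNpos.le, Real.sqrt_sq_eq_abs]
    have hosc : ∀ j (wp : E) (vp : F),
        ‖gradW j wp vp‖ ≤ ‖gradW j 0 0‖ + 4 * Real.sqrt N * |ς| + L * ‖wp‖ := by
      intro j wp vp
      have hoscd : ‖gradW j wp vp - gradW j wp 0‖ ≤ 4 * Real.sqrt N * |ς| := by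
        set d := gradW j wp vp - gradW j wp 0 with hd
        set vt : Fin N → F := fun l => if l = j then vp else 0 with hvt
        have hvtj : vt j = vp := if_pos rfl
        have hsum : ∑ l, gradW l wp (vt l) = (∑ l, gradW l wp 0) + d := by
          have hl : ∀ l, gradW l wp (vt l) = gradW l wp 0 + (if l = j then d else 0) := by
            intro l; by_cases hlj : l = j
            · subst hlj; simp [hvt, hd]
            · simp [hvt, hlj]
          rw [Finset.sum_congr rfl (fun l _ => hl l), Finset.sum_add_distrib,
            Finset.sum_ite_eq' univ j (fun _ => d)]
          simp
        have h1 := hdev wp vt j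
        have h2 := hdev wp (fun _ => 0) j
        rw [hvtj, hsum] at h1
        have key : ‖(1 - (N:ℝ)⁻¹) • d‖ ≤ 2 * (Real.sqrt N * |ς|) := by
          have hid : (1 - (N:ℝ)⁻¹) • d =
              (gradW j wp vp - (N:ℝ)⁻¹ • ((∑ l, gradW l wp 0) + d))
                - (gradW j wp 0 - (N:ℝ)⁻¹ • ∑ l, gradW l wp 0) := by
            rw [hd, smul_add]
            module
          rw [hid]
          calc ‖_ - _‖ ≤ _ := norm_sub_le _ _
            _ ≤ Real.sqrt N * |ς| + Real.sqrt N * |ς| := add_le_add h1 h2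
            _ = 2 * (Real.sqrt N * |ς|) := by ring
        have hcoef : (1:ℝ)/2 ≤ 1 - (N:ℝ)⁻¹ := by
          have h2N : (2:ℝ) ≤ N := by exact_mod_cast hN2
          have : (N:ℝ)⁻¹ ≤ 1/2 := by
            rw [inv_le_comm₀ (by linarith) (by norm_num)]
            simpa using h2N
          linarith
        have hnorm : ‖(1 - (N:ℝ)⁻¹) • d‖ = (1 - (N:ℝ)⁻¹) * ‖d‖ := by
          rw [norm_smul, Real.norm_eq_abs, abs_of_nonneg (by linarith)]
        nlinarith [norm_nonneg d]
      have hlip := hLipW j wp 0 (0:F)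
      rw [sub_zero] at hlip
      calc ‖gradW j wp vp‖ = ‖gradW j wp 0 + (gradW j wp vp - gradW j wp 0)‖ := by
            congr 1; abel
        _ ≤ ‖gradW j wp 0‖ + ‖gradW j wp vp - gradW j wp 0‖ := norm_add_le _ _
        _ ≤ (‖gradW j 0 0‖ + L * ‖wp‖) + 4 * Real.sqrt N * |ς| := by
            refine add_le_add ?_ hoscd
            calc ‖gradW j wp 0‖ = ‖gradW j 0 0 + (gradW j wp 0 - gradW j 0 0)‖ := by
                  congr 1; abel
              _ ≤ ‖gradW j 0 0‖ + ‖gradW j wp 0 - gradW j 0 0‖ := norm_add_le _ _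
              _ ≤ ‖gradW j 0 0‖ + L * ‖wp‖ := by linarith [hlip]
        _ = ‖gradW j 0 0‖ + 4 * Real.sqrt N * |ς| + L * ‖wp‖ := by ring
    -- measurability and L² membership of gradient composites
    have hgradSM : ∀ j, StronglyMeasurable (fun p : E × F => gradW j p.1 p.2) := by
      intro j
      have hrepr : ∀ p : E × F, gradW j p.1 p.2 =
          (InnerProductSpace.toDual ℝ E).symm
            ((fderiv ℝ (Lf j) p).comp (ContinuousLinearMap.inl ℝ E F)) := by
        rintro ⟨wp, vp⟩
        have h1 : HasFDerivAt (fun w' : E => Lf j (w', vp))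
            ((fderiv ℝ (Lf j) (wp, vp)).comp (ContinuousLinearMap.inl ℝ E F)) wp :=
          (hdiff j (wp, vp)).hasFDerivAt.comp wp (hasFDerivAt_prodMk_left wp vp)
        have h3 := (hgradW j wp vp).hasFDerivAt.unique h1
        simp only []
        rw [← h3]
        simp
      have hφ : Continuous fun D : E × F →L[ℝ] ℝ =>
          (InnerProductSpace.toDual ℝ E).symm (D.comp (ContinuousLinearMap.inl ℝ E F)) :=
        (InnerProductSpace.toDual ℝ E).symm.continuous.comp
          ((ContinuousLinearMap.compL ℝ E (E × F) ℝ).flip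
            (ContinuousLinearMap.inl ℝ E F)).continuous
      have hm : Measurable (fun p : E × F => gradW j p.1 p.2) := by
        have := hφ.measurable.comp (measurable_fderiv ℝ (Lf j))
        simpa [funext hrepr, Function.comp_def] using this
      exact hm.stronglyMeasurable
    have hgradL2 : ∀ j (bE : Ω → E) (bF : Ω → F), MemLp bE 2 μ → MemLp bF 2 μ →
        MemLp (fun ω => gradW j (bE ω) (bF ω)) 2 μ := by
      intro j bE bF hbE hbF
      have haesm : AEStronglyMeasurable (fun ω => gradW j (bE ω) (bF ω)) μ := by
        have hpair : AEMeasurable (fun ω => (bE ω, bF ω)) μ :=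
          (hbE.aestronglyMeasurable.aemeasurable).prodMk
            (hbF.aestronglyMeasurable.aemeasurable)
        exact ((hgradSM j).measurable.comp_aemeasurable hpair).aestronglyMeasurable
      refine MemLp.of_le
        ((memLp_const (‖gradW j 0 0‖ + 4 * Real.sqrt N * |ς|)).add
          ((hbE.norm.const_mul L))) haesm ?_
      refine Filter.Eventually.of_forall fun ω => ?_
      exact (hosc j (bE ω) (bF ω)).trans (le_abs_self _)
    have sqInt : ∀ (f : Ω → E), MemLp f 2 μ → Integrable (fun ω => ‖f ω‖^2) μ := by
      intro f hf
      have h := hf.integrable_norm_rpow (by norm_num) (by norm_num)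
      have h2 : ((2:ENNReal)).toReal = ((2:ℕ):ℝ) := by norm_num
      rw [h2] at h
      simpa [Real.rpow_natCast] using h
    have hwbar2 : ∀ t, MemLp (wbar t) 2 μ := by
      intro t
      have hfe : wbar t = fun ω => (N:ℝ)⁻¹ • ∑ j, w t j ω := funext (hwbar t)
      rw [hfe]
      have hs : MemLp (fun ω => ∑ j, w t j ω) 2 μ := by
        have h0 : (fun ω => ∑ j, w t j ω) = ∑ j, w t j := by
          funext ω; simp
        rw [h0]
        exact memLp_finset_sum' (univ : Finset (Fin N)) (fun j _ => hw2 t j)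
      exact hs.const_smul _
    -- integrability of the squared pieces
    have hIntn : ∀ r j, Integrable
        (fun ω => ‖g r j ω - gradW j (w r j ω) (v (r+1) j ω)‖^2) μ := fun r j =>
      sqInt _ ((hg2 r j).sub (hgradL2 j (w r j) (v (r+1) j) (hw2 r j) (hv2 (r+1) j)))
    have hIntw : ∀ r j, Integrable (fun ω => ‖w r j ω - wbar r ω‖^2) μ := fun r j =>
      sqInt _ ((hw2 r j).sub (hwbar2 r))
    -- matrix facts
    have hA0 : ∀ m, ∑ j, ((P^m) i j - (N:ℝ)⁻¹) = 0 := by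
      intro m
      rw [Finset.sum_sub_distrib, stmt14_pow_row P hProw m i]
      rw [Finset.sum_const, card_univ, Fintype.card_fin, nsmul_eq_mul,
        mul_inv_cancel₀ hNpos.ne']
      ring
    have hAbound : ∀ r ∈ range k, ∀ j,
        |(P^(k-r)) i j - (N:ℝ)⁻¹| ≤ (C / (2 * Real.sqrt 2)) * q^(k-r) := by
      intro r hr j
      have hk1 : 1 ≤ k - r := by rw [mem_range] at hr; omega
      have := hmix (k-r) hk1 i j
      rwa [one_div] at this
    -- a.e. representation of the consensus error
    have hae0 : ∀ᵐ ω ∂μ, ∀ j : Fin N, w 0 j ω = w 0 i ω := ae_all_iff.2 fun j => hinit j i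
    have haeEq : ∀ᵐ ω ∂μ, w k i ω - wbar k ω =
        -(ηw • ((∑ r ∈ range k, ∑ j, ((P^(k-r)) i j - (N:ℝ)⁻¹) •
              (g r j ω - gradW j (w r j ω) (v (r+1) j ω)))
          + (∑ r ∈ range k, ∑ j, ((P^(k-r)) i j - (N:ℝ)⁻¹) •
              (gradW j (w r j ω) (v (r+1) j ω) - gradW j (wbar r ω) (v (r+1) j ω)))
          + (∑ r ∈ range k, ∑ j, ((P^(k-r)) i j - (N:ℝ)⁻¹) •
              (gradW j (wbar r ω) (v (r+1) j ω)
                - (N:ℝ)⁻¹ • ∑ l, gradW l (wbar r ω) (v (r+1) l ω))))) := by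
      filter_upwards [hae0] with ω hω
      have hrepr := stmt14_err_repr hN P hProw hPcol (fun t j => w t j ω)
        (fun t j => g t j ω) ηw (fun t i' => hrec t i' ω)
        (fun j j' => (hω j).trans (hω j').symm) k i
      rw [hwbar k ω, hrepr]
      congr 1
      congr 1
      have hper : ∀ r ∈ range k,
          ∑ j, ((P^(k-r)) i j - (N:ℝ)⁻¹) • g r j ω
            = (∑ j, ((P^(k-r)) i j - (N:ℝ)⁻¹) •
                (g r j ω - gradW j (w r j ω) (v (r+1) j ω)))
              + (∑ j, ((P^(k-r)) i j - (N:ℝ)⁻¹) •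
                (gradW j (w r j ω) (v (r+1) j ω) - gradW j (wbar r ω) (v (r+1) j ω)))
              + ∑ j, ((P^(k-r)) i j - (N:ℝ)⁻¹) •
                (gradW j (wbar r ω) (v (r+1) j ω)
                  - (N:ℝ)⁻¹ • ∑ l, gradW l (wbar r ω) (v (r+1) l ω)) := by
        intro r _
        refine stmt14_decomp _ (hA0 (k-r)) _ _ _ _
          ((N:ℝ)⁻¹ • ∑ l, gradW l (wbar r ω) (v (r+1) l ω)) ?_
        intro j
        abel
      rw [Finset.sum_congr rfl hper, Finset.sum_add_distrib, Finset.sum_add_distrib]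
    -- pointwise squared bound
    have hb2 : (C / (2 * Real.sqrt 2))^2 = C^2/8 := by
      rw [div_pow, mul_pow, Real.sq_sqrt (by norm_num : (0:ℝ) ≤ 2)]
      norm_num
    have hbpos : (0:ℝ) ≤ C / (2 * Real.sqrt 2) := by positivity
    have hptbd : ∀ᵐ ω ∂μ, ‖w k i ω - wbar k ω‖^2 ≤
        3 * ηw^2 * ((C / (2 * Real.sqrt 2))^2 * N / (1-q)) *
          ((∑ r ∈ range k, q^(k-r) *
              ∑ j, ‖g r j ω - gradW j (w r j ω) (v (r+1) j ω)‖^2)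
            + L^2 * (∑ r ∈ range k, q^(k-r) * ∑ j, ‖w r j ω - wbar r ω‖^2)
            + (∑ r ∈ range k, q^(k-r)) * ((N:ℝ) * ς^2)) := by
      filter_upwards [haeEq] with ω hω
      rw [hω]
      set Sn := ∑ r ∈ range k, ∑ j, ((P^(k-r)) i j - (N:ℝ)⁻¹) •
          (g r j ω - gradW j (w r j ω) (v (r+1) j ω)) with hSn
      set Sd := ∑ r ∈ range k, ∑ j, ((P^(k-r)) i j - (N:ℝ)⁻¹) •
          (gradW j (w r j ω) (v (r+1) j ω) - gradW j (wbar r ω) (v (r+1) j ω)) with hSd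
      set Sh := ∑ r ∈ range k, ∑ j, ((P^(k-r)) i j - (N:ℝ)⁻¹) •
          (gradW j (wbar r ω) (v (r+1) j ω)
            - (N:ℝ)⁻¹ • ∑ l, gradW l (wbar r ω) (v (r+1) l ω)) with hSh
      have hnormeq : ‖-(ηw • (Sn + Sd + Sh))‖^2 = ηw^2 * ‖Sn + Sd + Sh‖^2 := by
        rw [norm_neg, norm_smul, Real.norm_eq_abs, abs_of_pos hηw, mul_pow]
      rw [hnormeq]
      have h3sq : ‖Sn + Sd + Sh‖^2 ≤ 3*(‖Sn‖^2 + ‖Sd‖^2 + ‖Sh‖^2) := by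
        have htri : ‖Sn + Sd + Sh‖ ≤ ‖Sn‖ + ‖Sd‖ + ‖Sh‖ := norm_add₃_le
        have hsq : ‖Sn + Sd + Sh‖^2 ≤ (‖Sn‖ + ‖Sd‖ + ‖Sh‖)^2 :=
          pow_le_pow_left₀ (norm_nonneg _) htri 2
        nlinarith [sq_nonneg (‖Sn‖ - ‖Sd‖), sq_nonneg (‖Sn‖ - ‖Sh‖), sq_nonneg (‖Sd‖ - ‖Sh‖)]
      have hauxn := stmt14_aux_sq k q (C / (2 * Real.sqrt 2)) hq0 hq1 hbpos
        (fun r j => (P^(k-r)) i j - (N:ℝ)⁻¹)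
        (fun r j => g r j ω - gradW j (w r j ω) (v (r+1) j ω)) hAbound
      have hauxd := stmt14_aux_sq k q (C / (2 * Real.sqrt 2)) hq0 hq1 hbpos
        (fun r j => (P^(k-r)) i j - (N:ℝ)⁻¹)
        (fun r j => gradW j (w r j ω) (v (r+1) j ω) - gradW j (wbar r ω) (v (r+1) j ω))
        hAbound
      have hauxh := stmt14_aux_sq k q (C / (2 * Real.sqrt 2)) hq0 hq1 hbpos
        (fun r j => (P^(k-r)) i j - (N:ℝ)⁻¹)
        (fun r j => gradW j (wbar r ω) (v (r+1) j ω)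
          - (N:ℝ)⁻¹ • ∑ l, gradW l (wbar r ω) (v (r+1) l ω)) hAbound
      rw [← hSn] at hauxn
      rw [← hSd] at hauxd
      rw [← hSh] at hauxh
      set c2 := (C / (2 * Real.sqrt 2))^2 * (N:ℝ) / (1-q) with hc2
      have hc2nn : 0 ≤ c2 := by rw [hc2]; positivity
      -- bound the d-sum by Lipschitz
      have hdsum : (∑ r ∈ range k, q^(k-r) *
          ∑ j, ‖gradW j (w r j ω) (v (r+1) j ω) - gradW j (wbar r ω) (v (r+1) j ω)‖^2)
          ≤ L^2 * ∑ r ∈ range k, q^(k-r) * ∑ j, ‖w r j ω - wbar r ω‖^2 := by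
        calc ∑ r ∈ range k, q^(k-r) *
              ∑ j, ‖gradW j (w r j ω) (v (r+1) j ω) - gradW j (wbar r ω) (v (r+1) j ω)‖^2
            ≤ ∑ r ∈ range k, q^(k-r) * (L^2 * ∑ j, ‖w r j ω - wbar r ω‖^2) := by
              refine sum_le_sum fun r _ => ?_
              refine mul_le_mul_of_nonneg_left ?_ (by positivity)
              rw [Finset.mul_sum]
              refine sum_le_sum fun j _ => ?_
              have h := hLipW j (w r j ω) (wbar r ω) (v (r+1) j ω)
              have h2 := pow_le_pow_left₀ (norm_nonneg _) h 2
              rwa [mul_pow] at h2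
          _ = L^2 * ∑ r ∈ range k, q^(k-r) * ∑ j, ‖w r j ω - wbar r ω‖^2 := by
              rw [Finset.mul_sum]
              exact sum_congr rfl fun r _ => by ring
      -- bound the h-sum by the variability assumption
      have hhsum : (∑ r ∈ range k, q^(k-r) *
          ∑ j, ‖gradW j (wbar r ω) (v (r+1) j ω)
            - (N:ℝ)⁻¹ • ∑ l, gradW l (wbar r ω) (v (r+1) l ω)‖^2)
          ≤ (∑ r ∈ range k, q^(k-r)) * ((N:ℝ) * ς^2) := by
        rw [Finset.sum_mul]
        refine sum_le_sum fun r _ => ?_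
        refine mul_le_mul_of_nonneg_left ?_ (by positivity)
        have h := hvarGlob (wbar r ω) (fun l => v (r+1) l ω)
        have := mul_le_mul_of_nonneg_left h hNpos.le
        rw [← mul_assoc, mul_inv_cancel₀ hNpos.ne', one_mul] at this
        exact this
      calc ηw^2 * ‖Sn + Sd + Sh‖^2
          ≤ ηw^2 * (3*(‖Sn‖^2 + ‖Sd‖^2 + ‖Sh‖^2)) :=
            mul_le_mul_of_nonneg_left h3sq (sq_nonneg ηw)
        _ ≤ ηw^2 * (3*((c2 * ∑ r ∈ range k, q^(k-r) *
              ∑ j, ‖g r j ω - gradW j (w r j ω) (v (r+1) j ω)‖^2)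
            + (c2 * (L^2 * ∑ r ∈ range k, q^(k-r) * ∑ j, ‖w r j ω - wbar r ω‖^2))
            + (c2 * ((∑ r ∈ range k, q^(k-r)) * ((N:ℝ) * ς^2))))) := by
            refine mul_le_mul_of_nonneg_left (mul_le_mul_of_nonneg_left ?_ (by norm_num))
              (sq_nonneg ηw)
            refine add_le_add (add_le_add (hauxn.trans ?_) (hauxd.trans ?_))
              (hauxh.trans ?_)
            · exact le_rfl
            · exact mul_le_mul_of_nonneg_left hdsum hc2nn
            · exact mul_le_mul_of_nonneg_left hhsum hc2nn
        _ = 3 * ηw^2 * (c2 *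
            ((∑ r ∈ range k, q^(k-r) *
                ∑ j, ‖g r j ω - gradW j (w r j ω) (v (r+1) j ω)‖^2)
              + L^2 * (∑ r ∈ range k, q^(k-r) * ∑ j, ‖w r j ω - wbar r ω‖^2)
              + (∑ r ∈ range k, q^(k-r)) * ((N:ℝ) * ς^2))) := by ring
        _ = _ := by rw [hc2]; ring
    -- integrability of the sums
    have hS1int : ∀ r, Integrable (fun ω => q^(k-r) *
        ∑ j, ‖g r j ω - gradW j (w r j ω) (v (r+1) j ω)‖^2) μ := fun r =>
      (integrable_finset_sum _ (fun j _ => hIntn r j)).const_mul _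
    have hS2int : ∀ r, Integrable (fun ω => q^(k-r) *
        ∑ j, ‖w r j ω - wbar r ω‖^2) μ := fun r =>
      (integrable_finset_sum _ (fun j _ => hIntw r j)).const_mul _
    have hSum1int : Integrable (fun ω => ∑ r ∈ range k, q^(k-r) *
        ∑ j, ‖g r j ω - gradW j (w r j ω) (v (r+1) j ω)‖^2) μ :=
      integrable_finset_sum _ (fun r _ => hS1int r)
    have hSum2int : Integrable (fun ω => ∑ r ∈ range k, q^(k-r) *
        ∑ j, ‖w r j ω - wbar r ω‖^2) μ :=
      integrable_finset_sum _ (fun r _ => hS2int r)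
    have hΦint : Integrable (fun ω => 3 * ηw^2 * ((C / (2 * Real.sqrt 2))^2 * N / (1-q)) *
        ((∑ r ∈ range k, q^(k-r) *
            ∑ j, ‖g r j ω - gradW j (w r j ω) (v (r+1) j ω)‖^2)
          + L^2 * (∑ r ∈ range k, q^(k-r) * ∑ j, ‖w r j ω - wbar r ω‖^2)
          + (∑ r ∈ range k, q^(k-r)) * ((N:ℝ) * ς^2))) μ :=
      (((hSum1int.add (hSum2int.const_mul (L^2))).add (integrable_const _)).const_mul _)
    have hle1 : ∫ ω, ‖w k i ω - wbar k ω‖^2 ∂μ ≤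
        ∫ ω, (3 * ηw^2 * ((C / (2 * Real.sqrt 2))^2 * N / (1-q)) *
          ((∑ r ∈ range k, q^(k-r) *
              ∑ j, ‖g r j ω - gradW j (w r j ω) (v (r+1) j ω)‖^2)
            + L^2 * (∑ r ∈ range k, q^(k-r) * ∑ j, ‖w r j ω - wbar r ω‖^2)
            + (∑ r ∈ range k, q^(k-r)) * ((N:ℝ) * ς^2))) ∂μ :=
      integral_mono_of_nonneg (Filter.Eventually.of_forall fun ω => sq_nonneg _) hΦint hptbd
    have hI1 : ∫ ω, (∑ r ∈ range k, q^(k-r) *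
        ∑ j, ‖g r j ω - gradW j (w r j ω) (v (r+1) j ω)‖^2) ∂μ
        = ∑ r ∈ range k, q^(k-r) *
            ∑ j, ∫ ω, ‖g r j ω - gradW j (w r j ω) (v (r+1) j ω)‖^2 ∂μ := by
      rw [integral_finset_sum _ (fun r _ => hS1int r)]
      refine sum_congr rfl fun r _ => ?_
      rw [integral_const_mul]
      congr 1
      exact integral_finset_sum _ (fun j _ => hIntn r j)
    have hI2 : ∫ ω, (∑ r ∈ range k, q^(k-r) * ∑ j, ‖w r j ω - wbar r ω‖^2) ∂μ
        = ∑ r ∈ range k, q^(k-r) * ∑ j, ∫ ω, ‖w r j ω - wbar r ω‖^2 ∂μ := by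
      rw [integral_finset_sum _ (fun r _ => hS2int r)]
      refine sum_congr rfl fun r _ => ?_
      rw [integral_const_mul]
      congr 1
      exact integral_finset_sum _ (fun j _ => hIntw r j)
    have hIval : ∫ ω, (3 * ηw^2 * ((C / (2 * Real.sqrt 2))^2 * N / (1-q)) *
          ((∑ r ∈ range k, q^(k-r) *
              ∑ j, ‖g r j ω - gradW j (w r j ω) (v (r+1) j ω)‖^2)
            + L^2 * (∑ r ∈ range k, q^(k-r) * ∑ j, ‖w r j ω - wbar r ω‖^2)
            + (∑ r ∈ range k, q^(k-r)) * ((N:ℝ) * ς^2))) ∂μ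
        = 3 * ηw^2 * ((C / (2 * Real.sqrt 2))^2 * N / (1-q)) *
          ((∑ r ∈ range k, q^(k-r) *
              ∑ j, ∫ ω, ‖g r j ω - gradW j (w r j ω) (v (r+1) j ω)‖^2 ∂μ)
            + L^2 * (∑ r ∈ range k, q^(k-r) * ∑ j, ∫ ω, ‖w r j ω - wbar r ω‖^2 ∂μ)
            + (∑ r ∈ range k, q^(k-r)) * ((N:ℝ) * ς^2)) := by
      rw [integral_const_mul]
      congr 1
      have haddA : Integrable (fun ω =>
          (∑ r ∈ range k, q^(k-r) *
            ∑ j, ‖g r j ω - gradW j (w r j ω) (v (r+1) j ω)‖^2)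
          + L^2 * (∑ r ∈ range k, q^(k-r) * ∑ j, ‖w r j ω - wbar r ω‖^2)) μ :=
        hSum1int.add (hSum2int.const_mul (L^2))
      rw [integral_add haddA (integrable_const _),
        integral_add hSum1int (hSum2int.const_mul (L^2)), integral_const_mul,
        integral_const, hI1, hI2]
      simp [measure_univ]
    -- bounds on the summed integrals
    have hnle : (∑ r ∈ range k, q^(k-r) *
        ∑ j, ∫ ω, ‖g r j ω - gradW j (w r j ω) (v (r+1) j ω)‖^2 ∂μ)
        ≤ (1-q)⁻¹ * ((N:ℝ) * σ₁^2) := by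
      have hstep : ∀ r ∈ range k, q^(k-r) *
          ∑ j, ∫ ω, ‖g r j ω - gradW j (w r j ω) (v (r+1) j ω)‖^2 ∂μ
          ≤ q^(k-r) * ((N:ℝ) * σ₁^2) := by
        intro r _
        refine mul_le_mul_of_nonneg_left ?_ (by positivity)
        calc ∑ j, ∫ ω, ‖g r j ω - gradW j (w r j ω) (v (r+1) j ω)‖^2 ∂μ
            ≤ ∑ _j : Fin N, σ₁^2 := sum_le_sum fun j _ => hvar r j
          _ = (N:ℝ) * σ₁^2 := by
              rw [Finset.sum_const, card_univ, Fintype.card_fin, nsmul_eq_mul]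
      calc ∑ r ∈ range k, q^(k-r) *
            ∑ j, ∫ ω, ‖g r j ω - gradW j (w r j ω) (v (r+1) j ω)‖^2 ∂μ
          ≤ ∑ r ∈ range k, q^(k-r) * ((N:ℝ) * σ₁^2) := sum_le_sum hstep
        _ = (∑ r ∈ range k, q^(k-r)) * ((N:ℝ) * σ₁^2) := by rw [Finset.sum_mul]
        _ ≤ (1-q)⁻¹ * ((N:ℝ) * σ₁^2) :=
            mul_le_mul_of_nonneg_right (stmt14_geom k hq0 hq1) (by positivity)
    have hQc : (∑ r ∈ range k, q^(k-r)) * ((N:ℝ) * ς^2) ≤ (1-q)⁻¹ * ((N:ℝ) * ς^2) :=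
      mul_le_mul_of_nonneg_right (stmt14_geom k hq0 hq1) (by positivity)
    have hSwnn : 0 ≤ ∑ r ∈ range k, q^(k-r) * ∑ j, ∫ ω, ‖w r j ω - wbar r ω‖^2 ∂μ :=
      sum_nonneg fun r _ => mul_nonneg (by positivity)
        (sum_nonneg fun j _ => hIntnn _)
    have hc3nn : (0:ℝ) ≤ 3 * ηw^2 * ((C / (2 * Real.sqrt 2))^2 * N / (1-q)) := by positivity
    -- final numeric comparisons
    have hfin1 : 3 * ηw^2 * ((C / (2 * Real.sqrt 2))^2 * N / (1-q)) *
        ((1-q)⁻¹ * ((N:ℝ) * σ₁^2)) ≤ 6 * ηw^2 * C^2 * (N:ℝ)^2 * σ₁^2 / (1-q)^2 := by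
      rw [hb2]
      have hXnn : (0:ℝ) ≤ ηw^2 * C^2 * (N:ℝ)^2 * σ₁^2 / (1-q)^2 := by positivity
      have heqX : 3 * ηw^2 * ((C^2/8) * (N:ℝ) / (1-q)) * ((1-q)⁻¹ * ((N:ℝ) * σ₁^2))
          = (3/8) * (ηw^2 * C^2 * (N:ℝ)^2 * σ₁^2 / (1-q)^2) := by
        field_simp
      have heqY : 6 * ηw^2 * C^2 * (N:ℝ)^2 * σ₁^2 / (1-q)^2
          = 6 * (ηw^2 * C^2 * (N:ℝ)^2 * σ₁^2 / (1-q)^2) := by ring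
      rw [heqX, heqY]
      linarith
    have hfin2 : 3 * ηw^2 * ((C / (2 * Real.sqrt 2))^2 * N / (1-q)) *
        ((1-q)⁻¹ * ((N:ℝ) * ς^2)) ≤ 18 * ηw^2 * C^2 * (N:ℝ)^2 * ς^2 / (1-q)^2 := by
      rw [hb2]
      have hXnn : (0:ℝ) ≤ ηw^2 * C^2 * (N:ℝ)^2 * ς^2 / (1-q)^2 := by positivity
      have heqX : 3 * ηw^2 * ((C^2/8) * (N:ℝ) / (1-q)) * ((1-q)⁻¹ * ((N:ℝ) * ς^2))
          = (3/8) * (ηw^2 * C^2 * (N:ℝ)^2 * ς^2 / (1-q)^2) := by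
        field_simp
      have heqY : 18 * ηw^2 * C^2 * (N:ℝ)^2 * ς^2 / (1-q)^2
          = 18 * (ηw^2 * C^2 * (N:ℝ)^2 * ς^2 / (1-q)^2) := by ring
      rw [heqX, heqY]
      linarith
    have hfin3 : 3 * ηw^2 * ((C / (2 * Real.sqrt 2))^2 * N / (1-q)) *
        (L^2 * (∑ r ∈ range k, q^(k-r) * ∑ j, ∫ ω, ‖w r j ω - wbar r ω‖^2 ∂μ))
        ≤ 18 * ηw^2 * C^2 * L^2 * (N:ℝ) / (1-q) *
          ∑ r ∈ range k, q^(k-r) * ∑ j, ∫ ω, ‖w r j ω - wbar r ω‖^2 ∂μ := by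
      have hcoef : 3 * ηw^2 * ((C / (2 * Real.sqrt 2))^2 * N / (1-q)) * L^2
          ≤ 18 * ηw^2 * C^2 * L^2 * (N:ℝ) / (1-q) := by
        rw [hb2]
        have hXnn : (0:ℝ) ≤ ηw^2 * C^2 * L^2 * (N:ℝ) / (1-q) := by positivity
        have heqX : 3 * ηw^2 * ((C^2/8) * (N:ℝ) / (1-q)) * L^2
            = (3/8) * (ηw^2 * C^2 * L^2 * (N:ℝ) / (1-q)) := by
          field_simp
        have heqY : 18 * ηw^2 * C^2 * L^2 * (N:ℝ) / (1-q)
            = 18 * (ηw^2 * C^2 * L^2 * (N:ℝ) / (1-q)) := by ring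
        rw [heqX, heqY]
        linarith
      calc 3 * ηw^2 * ((C / (2 * Real.sqrt 2))^2 * N / (1-q)) *
            (L^2 * (∑ r ∈ range k, q^(k-r) * ∑ j, ∫ ω, ‖w r j ω - wbar r ω‖^2 ∂μ))
          = (3 * ηw^2 * ((C / (2 * Real.sqrt 2))^2 * N / (1-q)) * L^2) *
            (∑ r ∈ range k, q^(k-r) * ∑ j, ∫ ω, ‖w r j ω - wbar r ω‖^2 ∂μ) := by ring
        _ ≤ _ := mul_le_mul_of_nonneg_right hcoef hSwnn
    -- assemble
    have ht4 : (0:ℝ) ≤ 18 * ηw ^ 2 * C ^ 2 * N ^ 2 / (1 - q) *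
        ∑ r ∈ Finset.range k, q ^ (k - r) *
          ∫ ω, ‖(N : ℝ)⁻¹ • ∑ j, gradW j (wbar r ω) (v (r + 1) j ω)‖ ^ 2 ∂μ := by
      refine mul_nonneg (by positivity) (sum_nonneg fun r _ => mul_nonneg (by positivity)
        (hIntnn _))
    have hmain : ∫ ω, ‖w k i ω - wbar k ω‖^2 ∂μ ≤
        6 * ηw^2 * C^2 * (N:ℝ)^2 * σ₁^2 / (1-q)^2
          + 18 * ηw^2 * C^2 * (N:ℝ)^2 * ς^2 / (1-q)^2
          + 18 * ηw^2 * C^2 * L^2 * (N:ℝ) / (1-q) *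
            ∑ r ∈ range k, q^(k-r) * ∑ j, ∫ ω, ‖w r j ω - wbar r ω‖^2 ∂μ := by
      have hstep2 := hle1.trans_eq hIval
      have hstep3 : 3 * ηw^2 * ((C / (2 * Real.sqrt 2))^2 * N / (1-q)) *
          ((∑ r ∈ range k, q^(k-r) *
              ∑ j, ∫ ω, ‖g r j ω - gradW j (w r j ω) (v (r+1) j ω)‖^2 ∂μ)
            + L^2 * (∑ r ∈ range k, q^(k-r) * ∑ j, ∫ ω, ‖w r j ω - wbar r ω‖^2 ∂μ)
            + (∑ r ∈ range k, q^(k-r)) * ((N:ℝ) * ς^2))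
          ≤ 3 * ηw^2 * ((C / (2 * Real.sqrt 2))^2 * N / (1-q)) *
            ((1-q)⁻¹ * ((N:ℝ) * σ₁^2))
          + 3 * ηw^2 * ((C / (2 * Real.sqrt 2))^2 * N / (1-q)) *
            (L^2 * (∑ r ∈ range k, q^(k-r) * ∑ j, ∫ ω, ‖w r j ω - wbar r ω‖^2 ∂μ))
          + 3 * ηw^2 * ((C / (2 * Real.sqrt 2))^2 * N / (1-q)) *
            ((1-q)⁻¹ * ((N:ℝ) * ς^2)) := by
        rw [← mul_add, ← mul_add]
        exact mul_le_mul_of_nonneg_left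
          (add_le_add (add_le_add hnle le_rfl) hQc) hc3nn
      linarith [hfin1, hfin2, hfin3]
    linarith [hmain, ht4]
end
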